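/- arXiv:1801.00749 — 5 statements merged into one kernel-verified Lean document; each statement's English description precedes it below -/
import Mathlib

section
/- Every cut matrix cc^T with c ∈ {±1}^n is an extreme point of the elliptope E_n. -/
open Matrix

/-- The elliptope: n×n real symmetric psd matrices with unit diagonal. -/
def elliptope (n : ℕ) : Set (Matrix (Fin n) (Fin n) ℝ) :=
  {X | X.PosSemidef ∧ ∀ i, X i i = 1}

lemma vecMulVec_posSemidef {n : ℕ} (c : Fin n → ℝ) :
    (Matrix.vecMulVec c c).PosSemidef := by
  rw [Matrix.posSemidef_iff_dotProduct_mulVec]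
  constructor
  · ext i j
    simp [Matrix.vecMulVec, Matrix.IsHermitian, mul_comm]
  · intro x
    have : (Matrix.vecMulVec c c) *ᵥ x = (c ⬝ᵥ x) • c := by
      ext i
      simp only [Matrix.mulVec, Matrix.vecMulVec, dotProduct, Matrix.of_apply,
        Pi.smul_apply, smul_eq_mul, Finset.sum_mul]
      exact Finset.sum_congr rfl fun k _ => by ring
    rw [this]
    simp only [star_trivial, dotProduct_smul, smul_eq_mul]
    have hx : x ⬝ᵥ c = c ⬝ᵥ x := dotProduct_comm x c
    rw [hx]
    exact mul_self_nonneg _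

/-- Key inequality: for Y PSD with unit diagonal and t with t*t=1, t * Y i j ≤ 1. -/
lemma psd_entry_le {n : ℕ} {Y : Matrix (Fin n) (Fin n) ℝ} (hY : Y.PosSemidef)
    (hdiag : ∀ i, Y i i = 1) (i j : Fin n) {t : ℝ} (ht : t * t = 1) :
    t * Y i j ≤ 1 := by
  rcases eq_or_ne i j with rfl | hij
  · have h := hdiag i
    nlinarith [sq_nonneg (t - 1), sq_nonneg (t + 1)]
  · set x : Fin n → ℝ := fun k => if k = i then 1 else if k = j then -t else 0 with hx
    have h := hY.dotProduct_mulVec_nonneg x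
    have hsym : Y j i = Y i j := by
      have := hY.1
      rw [Matrix.IsHermitian] at this
      conv_lhs => rw [← this]
      simp [Matrix.conjTranspose_apply]
    have hmv : ∀ k, (Y *ᵥ x) k = Y k i - t * Y k j := by
      intro k
      simp only [Matrix.mulVec, dotProduct, hx]
      rw [Finset.sum_eq_add_of_mem i j (Finset.mem_univ i) (Finset.mem_univ j) hij]
      · simp [Ne.symm hij]; ring
      · intro k hk ⟨hki, hkj⟩
        simp [hki, hkj]
    have hdp : x ⬝ᵥ (Y *ᵥ x) = Y i i - t * Y i j - t * (Y j i - t * Y j j) := by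
      simp only [dotProduct, hx]
      rw [Finset.sum_eq_add_of_mem i j (Finset.mem_univ i) (Finset.mem_univ j) hij]
      · simp [Ne.symm hij, ← hx, hmv]; ring
      · intro k hk ⟨hki, hkj⟩
        simp [hki, hkj]
    rw [star_trivial, hdp, hdiag, hdiag, hsym] at h
    nlinarith

theorem cutMatrix_extremePoint {n : ℕ} (c : Fin n → ℝ)
    (hc : ∀ i, c i = 1 ∨ c i = -1) :
    Matrix.vecMulVec c c ∈ Set.extremePoints ℝ (elliptope n) := by
  have hc2 : ∀ i, c i * c i = 1 := by
    intro i; rcases hc i with h | h <;> rw [h] <;> norm_num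
  have hmem : Matrix.vecMulVec c c ∈ elliptope n := by
    refine ⟨vecMulVec_posSemidef c, fun i => ?_⟩
    simp [Matrix.vecMulVec, hc2 i]
  refine ⟨hmem, fun Y hY Z hZ hseg => ?_⟩
  obtain ⟨a, b, ha, hb, hab, habY⟩ := hseg
  -- key claim: any element of elliptope W appearing in the combination equals cc^T entrywise
  have key : ∀ (i j : Fin n),
      Y i j = c i * c j ∧ Z i j = c i * c j := by
    intro i j
    have ht : (c i * c j) * (c i * c j) = 1 := by
      have := hc2 i; have := hc2 j; nlinarith
    have hYle : (c i * c j) * Y i j ≤ 1 := psd_entry_le hY.1 hY.2 i j ht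
    have hZle : (c i * c j) * Z i j ≤ 1 := psd_entry_le hZ.1 hZ.2 i j ht
    have hentry : a * Y i j + b * Z i j = c i * c j := by
      have := congrFun (congrFun habY i) j
      simpa [Matrix.add_apply, Matrix.smul_apply, Matrix.vecMulVec_apply] using this
    have h1 : a * (1 - c i * c j * Y i j) + b * (1 - c i * c j * Z i j) = 0 := by
      linear_combination hab - (c i * c j) * hentry - ht
    have h2 : a * (1 - c i * c j * Y i j) = 0 ∧ b * (1 - c i * c j * Z i j) = 0 := by
      constructor <;>
        linarith [mul_nonneg ha.le (sub_nonneg.2 hYle),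
          mul_nonneg hb.le (sub_nonneg.2 hZle)]
    have hY' : c i * c j * Y i j = 1 := by
      have := h2.1
      rcases mul_eq_zero.1 this with h | h
      · exact absurd h (ne_of_gt ha)
      · linarith
    have hZ' : c i * c j * Z i j = 1 := by
      have := h2.2
      rcases mul_eq_zero.1 this with h | h
      · exact absurd h (ne_of_gt hb)
      · linarith
    constructor
    · linear_combination (c i * c j) * hY' - Y i j * ht
    · linear_combination (c i * c j) * hZ' - Z i j * ht
  ext i j; simp only [Matrix.vecMulVec_apply]
  · exact (key i j).1
end

section
/- Let w ∼ SBern(p, r) with p ∈ (0,1), set α = (2p-1)^2, and define y ∈ ℝ^{r(r-1)/2} by y_{ij} = 1 - w_i w_j for 1 ≤ i < j ≤ r. Then the smallest eigenvalue of the second-moment matrix Σ = E[yy^T] is at least (1-α)^2. -/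
open MeasureTheory Matrix

/-- The signed Bernoulli distribution on ℝ: +1 with probability p, -1 with probability 1-p. -/
noncomputable def signBern (p : ℝ) : Measure ℝ :=
  ENNReal.ofReal p • Measure.dirac 1 + ENNReal.ofReal (1 - p) • Measure.dirac (-1)

/-- The distribution SBern(p, r). -/
noncomputable def signBernVec (p : ℝ) (r : ℕ) : Measure (Fin r → ℝ) :=
  Measure.pi fun _ => signBern p

/-- Index set of pairs (i,j) with i < j. -/
abbrev PairIndex (r : ℕ) := {q : Fin r × Fin r // q.1 < q.2}

/-- The vector y derived from w: y_{ij} = 1 - w_i * w_j for i < j. -/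
def yVec {r : ℕ} (w : Fin r → ℝ) : PairIndex r → ℝ :=
  fun q => 1 - w q.1.1 * w q.1.2

open scoped symmDiff

lemma signBern_prob {p : ℝ} (h0 : 0 ≤ p) (h1 : p ≤ 1) : IsProbabilityMeasure (signBern p) := by
  constructor
  simp [signBern, Measure.add_apply, Measure.smul_apply, measure_univ, smul_eq_mul]
  rw [← ENNReal.ofReal_add h0 (by linarith)]
  norm_num

lemma integrable_id_dirac {a : ℝ} : Integrable id (Measure.dirac a) :=
  ⟨measurable_id.aestronglyMeasurable, by
    rw [HasFiniteIntegral, lintegral_dirac]; exact ENNReal.coe_lt_top⟩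

lemma integral_id_signBern {p : ℝ} (h0 : 0 ≤ p) (h1 : p ≤ 1) :
    ∫ x, x ∂signBern p = 2 * p - 1 := by
  unfold signBern
  show ∫ x, id x ∂_ = _
  rw [integral_add_measure
      (integrable_id_dirac.smul_measure ENNReal.ofReal_ne_top)
      (integrable_id_dirac.smul_measure ENNReal.ofReal_ne_top)]
  rw [integral_smul_measure, integral_smul_measure, integral_dirac, integral_dirac]
  simp [ENNReal.toReal_ofReal h0, ENNReal.toReal_ofReal (by linarith : (0:ℝ) ≤ 1 - p)]
  ring

lemma signBernVec_prob {p : ℝ} (h0 : 0 ≤ p) (h1 : p ≤ 1) (r : ℕ) :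
    IsProbabilityMeasure (signBernVec p r) := by
  haveI := signBern_prob h0 h1
  unfold signBernVec
  infer_instance

lemma integral_prod_signBernVec {p : ℝ} (h0 : 0 ≤ p) (h1 : p ≤ 1) {r : ℕ}
    (s : Finset (Fin r)) :
    ∫ w, ∏ m ∈ s, w m ∂signBernVec p r = (2 * p - 1) ^ s.card := by
  haveI := signBern_prob h0 h1
  letI : MeasureSpace ℝ := ⟨signBern p⟩
  haveI : IsProbabilityMeasure (volume : Measure ℝ) := signBern_prob h0 h1
  have hvol : signBernVec p r = (volume : Measure (Fin r → ℝ)) := by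
    rw [MeasureTheory.volume_pi]; rfl
  rw [hvol]
  have hkey := MeasureTheory.integral_fintype_prod_eq_prod (ι := Fin r)
    (fun m (x : ℝ) => if m ∈ s then x else 1) (μ := fun _ => volume)
  rw [← MeasureTheory.volume_pi] at hkey
  have h1' : ∀ w : Fin r → ℝ, (∏ m, if m ∈ s then w m else 1) = ∏ m ∈ s, w m := by
    intro w; rw [Finset.prod_ite_mem, Finset.univ_inter]
  simp only [h1'] at hkey
  rw [hkey]
  have h2 : ∀ m : Fin r, (∫ x : ℝ, if m ∈ s then x else 1) = if m ∈ s then 2*p-1 else 1 := by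
    intro m
    by_cases hm : m ∈ s
    · simp only [if_pos hm]; exact integral_id_signBern h0 h1
    · simp [hm]
  simp only [h2]
  rw [Finset.prod_ite_mem, Finset.univ_inter, Finset.prod_const]

lemma ae_pm_one {p : ℝ} (h0 : 0 ≤ p) (h1 : p ≤ 1) (r : ℕ) :
    ∀ᵐ w ∂signBernVec p r, ∀ m, w m = 1 ∨ w m = -1 := by
  haveI := signBern_prob h0 h1
  haveI := signBernVec_prob h0 h1 r
  have hT : MeasurableSet ({1, -1} : Set ℝ) := (Set.toFinite _).measurableSet
  have hS : MeasurableSet (Set.pi Set.univ fun _ : Fin r => ({1, -1} : Set ℝ)) :=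
    MeasurableSet.univ_pi fun _ => hT
  have hTm : signBern p ({1, -1} : Set ℝ) = 1 := by
    simp [signBern, Measure.add_apply, Measure.dirac_apply' _ hT]
    rw [← ENNReal.ofReal_add h0 (by linarith)]
    norm_num
  have hSm : signBernVec p r (Set.pi Set.univ fun _ => ({1, -1} : Set ℝ)) = 1 := by
    unfold signBernVec
    rw [Measure.pi_pi]
    simp [hTm]
  have : signBernVec p r (Set.pi Set.univ fun _ => ({1, -1} : Set ℝ))ᶜ = 0 := by
    rw [measure_compl hS (measure_ne_top _ _), measure_univ, hSm, tsub_self]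
  filter_upwards [MeasureTheory.measure_eq_zero_iff_ae_notMem.mp this] with w hw m
  have := Set.not_notMem.mp hw
  have hm := this m (Set.mem_univ m)
  simpa using hm

lemma integrable_prod_signBernVec {p : ℝ} (h0 : 0 ≤ p) (h1 : p ≤ 1) {r : ℕ}
    (s : Finset (Fin r)) :
    Integrable (fun w => ∏ m ∈ s, w m) (signBernVec p r) := by
  haveI := signBernVec_prob h0 h1 r
  refine ⟨(Finset.measurable_prod s fun m _ => measurable_pi_apply m).aestronglyMeasurable, ?_⟩
  apply HasFiniteIntegral.of_bounded (C := 1)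
  filter_upwards [ae_pm_one h0 h1 r] with w hw
  rw [Real.norm_eq_abs, Finset.abs_prod]
  calc ∏ m ∈ s, |w m| = ∏ m ∈ s, 1 := by
        refine Finset.prod_congr rfl fun m _ => ?_
        rcases hw m with h | h <;> rw [h] <;> norm_num
    _ ≤ 1 := by rw [Finset.prod_const_one]

/-- product of ±1 over two finsets equals product over symmDiff -/
lemma prod_mul_prod_symmDiff {r : ℕ} {w : Fin r → ℝ} (hw : ∀ m, w m = 1 ∨ w m = -1)
    (A B : Finset (Fin r)) :
    (∏ m ∈ A, w m) * (∏ m ∈ B, w m) = ∏ m ∈ A ∆ B, w m := by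
  have hA : ∏ m ∈ A, w m = (∏ m ∈ A \ B, w m) * ∏ m ∈ A ∩ B, w m := by
    rw [← Finset.prod_union (Finset.disjoint_sdiff_inter A B), Finset.sdiff_union_inter]
  have hB : ∏ m ∈ B, w m = (∏ m ∈ B \ A, w m) * ∏ m ∈ A ∩ B, w m := by
    rw [Finset.inter_comm A B,
      ← Finset.prod_union (Finset.disjoint_sdiff_inter B A), Finset.sdiff_union_inter]
  have hsq : (∏ m ∈ A ∩ B, w m) * (∏ m ∈ A ∩ B, w m) = 1 := by
    rw [← Finset.prod_mul_distrib]
    rw [Finset.prod_eq_one]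
    intro m _
    rcases hw m with h | h <;> rw [h] <;> norm_num
  have hsd : A ∆ B = (A \ B) ∪ (B \ A) := by
    rw [symmDiff_def, Finset.sup_eq_union]
  rw [hA, hB, hsd, Finset.prod_union disjoint_sdiff_sdiff]
  linear_combination (∏ m ∈ A \ B, w m) * (∏ m ∈ B \ A, w m) * hsq

lemma entry_integral {p : ℝ} (h0 : 0 ≤ p) (h1 : p ≤ 1) {r : ℕ} (a b : PairIndex r) :
    ∫ w, yVec w a * yVec w b ∂signBernVec p r
      = 1 - 2 * (2 * p - 1) ^ 2
        + (2 * p - 1) ^ (({a.1.1, a.1.2} ∆ {b.1.1, b.1.2} : Finset (Fin r)).card) := by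
  haveI := signBernVec_prob h0 h1 r
  set A : Finset (Fin r) := {a.1.1, a.1.2} with hAdef
  set B : Finset (Fin r) := {b.1.1, b.1.2} with hBdef
  have hane : a.1.1 ≠ a.1.2 := ne_of_lt a.2
  have hbne : b.1.1 ≠ b.1.2 := ne_of_lt b.2
  have key : ∫ w, yVec w a * yVec w b ∂signBernVec p r
      = ∫ w, (1 - (∏ m ∈ A, w m) - (∏ m ∈ B, w m) + ∏ m ∈ A ∆ B, w m) ∂signBernVec p r := by
    refine integral_congr_ae ?_
    filter_upwards [ae_pm_one h0 h1 r] with w hw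
    have hpA : ∏ m ∈ A, w m = w a.1.1 * w a.1.2 := Finset.prod_pair hane
    have hpB : ∏ m ∈ B, w m = w b.1.1 * w b.1.2 := Finset.prod_pair hbne
    have := prod_mul_prod_symmDiff hw A B
    rw [hpA, hpB] at this
    simp only [yVec]
    rw [← this, hpA, hpB]
    ring
  rw [key]
  have iA := integrable_prod_signBernVec h0 h1 A
  have iB := integrable_prod_signBernVec h0 h1 B
  have iC := integrable_prod_signBernVec h0 h1 (A ∆ B)
  have i1 : Integrable (fun _ : Fin r → ℝ => (1:ℝ)) (signBernVec p r) := integrable_const 1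
  have iA1 : Integrable (fun w : Fin r → ℝ => 1 - ∏ m ∈ A, w m) (signBernVec p r) := by
    exact i1.sub iA
  have iAB1 : Integrable (fun w : Fin r → ℝ => 1 - ∏ m ∈ A, w m - ∏ m ∈ B, w m)
      (signBernVec p r) := by exact iA1.sub iB
  rw [integral_add iAB1 iC, integral_sub iA1 iB, integral_sub i1 iA]
  rw [integral_prod_signBernVec h0 h1, integral_prod_signBernVec h0 h1,
    integral_prod_signBernVec h0 h1]
  have hcA : A.card = 2 := Finset.card_pair hane
  have hcB : B.card = 2 := Finset.card_pair hbne
  rw [hcA, hcB]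
  simp [measure_univ]
  ring

lemma pair_ext {r : ℕ} (a b : PairIndex r)
    (h : ({a.1.1, a.1.2} : Finset (Fin r)) = {b.1.1, b.1.2}) : a = b := by
  obtain ⟨⟨i, j⟩, hij⟩ := a
  obtain ⟨⟨k, l⟩, hkl⟩ := b
  simp only at h hij hkl ⊢
  have hk : k ∈ ({i, j} : Finset (Fin r)) := by rw [h]; simp
  have hl : l ∈ ({i, j} : Finset (Fin r)) := by rw [h]; simp
  simp only [Finset.mem_insert, Finset.mem_singleton] at hk hl
  apply Subtype.ext
  rcases hk with hk | hk <;> rcases hl with hl | hl <;> subst hk <;> subst hl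
  · exact absurd hkl (lt_irrefl _)
  · rfl
  · exact absurd (hkl.trans hij) (lt_irrefl _)
  · exact absurd hkl (lt_irrefl _)

/-- indicator of membership of m in the pair a -/
def chi {r : ℕ} (m : Fin r) (a : PairIndex r) : ℝ :=
  if m = a.1.1 ∨ m = a.1.2 then 1 else 0

lemma chi_sum {r : ℕ} (a b : PairIndex r) :
    ∑ m, chi m a * chi m b
      = ((({a.1.1, a.1.2} : Finset (Fin r)) ∩ {b.1.1, b.1.2}).card : ℝ) := by
  have : ∀ m : Fin r, chi m a * chi m b
      = if m ∈ ({a.1.1, a.1.2} : Finset (Fin r)) ∩ {b.1.1, b.1.2} then (1:ℝ) else 0 := by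
    intro m
    simp only [chi, Finset.mem_inter, Finset.mem_insert, Finset.mem_singleton]
    by_cases h1 : m = a.1.1 ∨ m = a.1.2 <;> by_cases h2 : m = b.1.1 ∨ m = b.1.2 <;>
      simp [h1, h2]
  simp only [this]
  rw [Finset.sum_ite_mem, Finset.univ_inter, Finset.sum_const, nsmul_eq_mul, mul_one]

lemma entry_decomp {r : ℕ} (μ : ℝ) (a b : PairIndex r) :
    1 - 2 * μ ^ 2 + μ ^ (({a.1.1, a.1.2} ∆ {b.1.1, b.1.2} : Finset (Fin r)).card)
      = (1 - μ^2)^2 + (if a = b then (1 - μ^2)^2 else 0)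
        + (μ^2 * (1 - μ^2)) * ∑ m, chi m a * chi m b := by
  rw [chi_sum]
  set A : Finset (Fin r) := {a.1.1, a.1.2} with hAdef
  set B : Finset (Fin r) := {b.1.1, b.1.2} with hBdef
  have hcA : A.card = 2 := Finset.card_pair (ne_of_lt a.2)
  have hcB : B.card = 2 := Finset.card_pair (ne_of_lt b.2)
  have hsd : A ∆ B = (A \ B) ∪ (B \ A) := by
    rw [symmDiff_def, Finset.sup_eq_union]
  have hcard : (A ∆ B).card = (A \ B).card + (B \ A).card := by
    rw [hsd, Finset.card_union_of_disjoint disjoint_sdiff_sdiff]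
  have h1 : (A \ B).card + (A ∩ B).card = 2 := by
    rw [Finset.card_sdiff_add_card_inter, hcA]
  have h2 : (B \ A).card + (A ∩ B).card = 2 := by
    rw [Finset.inter_comm A B, Finset.card_sdiff_add_card_inter, hcB]
  have habAB : a = b → (A ∩ B).card = 2 := by
    intro hab
    have hAB : A = B := by rw [hAdef, hBdef, hab]
    rw [hAB, Finset.inter_self, hcB]
  obtain ht | ht | ht : (A ∩ B).card = 0 ∨ (A ∩ B).card = 1 ∨ (A ∩ B).card = 2 := by omega
  · rw [if_neg (fun hab => by rw [habAB hab] at ht; omega)]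
    have hc4 : (A ∆ B).card = 4 := by omega
    rw [hc4, ht]
    push_cast
    ring
  · rw [if_neg (fun hab => by rw [habAB hab] at ht; omega)]
    have hc2 : (A ∆ B).card = 2 := by omega
    rw [hc2, ht]
    push_cast
    ring
  · have hAB : A = B := by
      have hA' : A ∩ B = A :=
        Finset.eq_of_subset_of_card_le Finset.inter_subset_left (by omega)
      have hB' : A ∩ B = B :=
        Finset.eq_of_subset_of_card_le Finset.inter_subset_right (by omega)
      rw [← hA', hB']
    rw [if_pos (pair_ext a b hAB)]
    have hc0 : (A ∆ B).card = 0 := by omega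
    rw [hc0, ht]
    push_cast
    ring

/-- quadratic form identity -/
lemma quad_ident {n ι : Type*} [Fintype n] [Fintype ι] [DecidableEq n]
    (c d : ℝ) (χ : ι → n → ℝ) (v : n → ℝ)
    (E : Matrix n n ℝ)
    (hE : ∀ a b, E a b = c + (if a = b then c else 0) + d * ∑ m, χ m a * χ m b) :
    v ⬝ᵥ (E *ᵥ v) =
      c * (∑ a, v a) ^ 2 + c * ∑ a, (v a) ^ 2 + d * ∑ m, (∑ a, χ m a * v a) ^ 2 := by
  have step1 : v ⬝ᵥ (E *ᵥ v) =
      ∑ a, ∑ b, (v a * (c * v b) + v a * ((if a = b then c else 0) * v b)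
        + d * ∑ m, (χ m a * v a) * (χ m b * v b)) := by
    simp only [dotProduct, mulVec, hE]
    refine Finset.sum_congr rfl fun a _ => ?_
    rw [Finset.mul_sum]
    refine Finset.sum_congr rfl fun b _ => ?_
    have hS : ∑ m, (χ m a * v a) * (χ m b * v b) = (∑ m, χ m a * χ m b) * (v a * v b) := by
      rw [Finset.sum_mul]; exact Finset.sum_congr rfl fun m _ => by ring
    rw [hS]; ring
  rw [step1]
  simp only [Finset.sum_add_distrib]
  congr 1
  · congr 1
    · rw [sq, Finset.sum_mul_sum, Finset.mul_sum]
      refine Finset.sum_congr rfl fun a _ => ?_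
      rw [Finset.mul_sum]
      exact Finset.sum_congr rfl fun b _ => by ring
    · simp only [mul_ite, mul_zero, ite_mul, zero_mul, Finset.sum_ite_eq, Finset.mem_univ,
        if_pos, Finset.mul_sum]
      exact Finset.sum_congr rfl fun a _ => by ring
  · simp only [← Finset.mul_sum]
    congr 1
    calc ∑ a, ∑ b, ∑ m, (χ m a * v a) * (χ m b * v b)
        = ∑ a, ∑ m, ∑ b, (χ m a * v a) * (χ m b * v b) :=
          Finset.sum_congr rfl fun a _ => Finset.sum_comm
      _ = ∑ m, ∑ a, ∑ b, (χ m a * v a) * (χ m b * v b) := Finset.sum_comm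
      _ = ∑ m, (∑ a, χ m a * v a) ^ 2 := by
          refine Finset.sum_congr rfl fun m _ => ?_
          rw [sq, Finset.sum_mul_sum]

theorem min_eigenvalue_secondMoment_yVec {r : ℕ} (p : ℝ) (hp : p ∈ Set.Ioo (0:ℝ) 1)
    (α : ℝ) (hα : α = (2 * p - 1) ^ 2)
    (Sig : Matrix (PairIndex r) (PairIndex r) ℝ)
    (hSig : Sig = Matrix.of fun a b => ∫ w, yVec w a * yVec w b ∂(signBernVec p r))
    (hHerm : Sig.IsHermitian) :
    ∀ k, (1 - α) ^ 2 ≤ hHerm.eigenvalues k := by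
  intro k
  have h0 : 0 ≤ p := le_of_lt hp.1
  have h1 : p ≤ 1 := le_of_lt hp.2
  set μv : ℝ := 2 * p - 1 with hμv
  have hα2 : α = μv ^ 2 := hα
  have hμ1 : μv ^ 2 ≤ 1 := by nlinarith [hp.1, hp.2]
  set c : ℝ := (1 - μv ^ 2) ^ 2 with hc
  set d : ℝ := μv ^ 2 * (1 - μv ^ 2) with hd
  have hE : ∀ a b, Sig a b = c + (if a = b then c else 0) + d * ∑ m, chi m a * chi m b := by
    intro a b
    rw [hSig]
    show (∫ w, yVec w a * yVec w b ∂(signBernVec p r)) = _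
    rw [entry_integral h0 h1 a b, entry_decomp μv a b]
  -- key inequality for any vector
  have key : ∀ v : PairIndex r → ℝ, c * ∑ a, (v a) ^ 2 ≤ v ⬝ᵥ (Sig *ᵥ v) := by
    intro v
    rw [quad_ident c d chi v Sig hE]
    have hc0 : 0 ≤ c := sq_nonneg _
    have hd0 : 0 ≤ d := mul_nonneg (sq_nonneg _) (by linarith)
    have t1 : 0 ≤ c * (∑ a, v a) ^ 2 := mul_nonneg hc0 (sq_nonneg _)
    have t3 : 0 ≤ d * ∑ m, (∑ a, chi m a * v a) ^ 2 :=
      mul_nonneg hd0 (Finset.sum_nonneg fun m _ => sq_nonneg _)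
    linarith
  -- eigenvector
  set v : PairIndex r → ℝ := ⇑(hHerm.eigenvectorBasis k) with hv
  have heig : hHerm.eigenvalues k = v ⬝ᵥ (Sig *ᵥ v) := by
    have := hHerm.eigenvalues_eq k
    simpa using this
  have hnorm : ∑ a, (v a) ^ 2 = 1 := by
    have hn : ‖hHerm.eigenvectorBasis k‖ = 1 := hHerm.eigenvectorBasis.orthonormal.1 k
    rw [EuclideanSpace.norm_eq] at hn
    have hnn : 0 ≤ ∑ a, ‖hHerm.eigenvectorBasis k a‖ ^ 2 :=
      Finset.sum_nonneg fun a _ => sq_nonneg _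
    have := congrArg (· ^ 2) hn
    simp only [Real.sq_sqrt hnn, one_pow] at this
    rw [← this]
    exact Finset.sum_congr rfl fun a _ => by rw [Real.norm_eq_abs, sq_abs]
  have := key v
  rw [hnorm, mul_one] at this
  rw [heig]
  calc (1 - α) ^ 2 = c := by rw [hc, hα2]
    _ ≤ v ⬝ᵥ (Sig *ᵥ v) := this
end

section
/- Let x ∈ ℝ^d be a random vector with E[xx^T] = Σ, λ = λ_min(Σ) > 0, and ‖x‖² ≤ B almost surely. If x_1, ..., x_s are i.i.d. copies of x, then the probability that span{x_1,...,x_s} ≠ ℝ^d is at most d·exp(-λs/(2B)). -/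
open MeasureTheory ProbabilityTheory Matrix

section Aux
variable {d : ℕ}

/-- trace of product of two real psd matrices is nonnegative -/
lemma trace_mul_psd_nonneg {M N : Matrix (Fin d) (Fin d) ℝ}
    (hM : M.PosSemidef) (hN : N.PosSemidef) : 0 ≤ (M * N).trace := by
  obtain ⟨R, rfl⟩ : ∃ R : Matrix (Fin d) (Fin d) ℝ, M = Rᴴ * R := by
    classical
    refine ⟨Matrix.diagonal (fun i => Real.sqrt (hM.1.eigenvalues i)) *
      star (hM.1.eigenvectorUnitary : Matrix (Fin d) (Fin d) ℝ), ?_⟩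
    have hd : Matrix.diagonal (RCLike.ofReal ∘ hM.1.eigenvalues)
        = (Matrix.diagonal fun i => Real.sqrt (hM.1.eigenvalues i))ᴴ *
          Matrix.diagonal (fun i => Real.sqrt (hM.1.eigenvalues i)) := by
      rw [Matrix.diagonal_conjTranspose, Matrix.diagonal_mul_diagonal]
      congr 1; funext i
      simp [Real.mul_self_sqrt (hM.eigenvalues_nonneg i)]
    conv_lhs => rw [hM.1.spectral_theorem, Unitary.conjStarAlgAut_apply, hd]
    rw [Matrix.conjTranspose_mul, ← Matrix.star_eq_conjTranspose (star _), star_star]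
    simp only [Matrix.mul_assoc]
  rw [Matrix.trace_mul_cycle, Matrix.trace_mul_cycle]
  have key : ∀ i, 0 ≤ (R * N * Rᴴ) i i := by
    intro i
    have h2 := hN.dotProduct_mulVec_nonneg (fun j => R i j)
    have heq : (R * N * Rᴴ) i i = star (fun j => R i j) ⬝ᵥ N *ᵥ (fun j => R i j) := by
      simp only [Matrix.mul_apply, dotProduct, Matrix.mulVec, Matrix.conjTranspose_apply,
        star_trivial, Pi.star_apply, Finset.sum_mul, Finset.mul_sum]
      rw [Finset.sum_comm]
      exact Finset.sum_congr rfl fun y _ => Finset.sum_congr rfl fun x _ => by ring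
    rw [heq]
    exact h2
  exact Finset.sum_nonneg fun i _ => key i

lemma trace_mul_le_of_psd {M N : Matrix (Fin d) (Fin d) ℝ} {c : ℝ}
    (hM : M.PosSemidef) (hN : (c • (1 : Matrix (Fin d) (Fin d) ℝ) - N).PosSemidef) :
    (M * N).trace ≤ c * M.trace := by
  have h := trace_mul_psd_nonneg hM hN
  have heq : M * (c • 1 - N) = c • M - M * N := by
    rw [Matrix.mul_sub, Matrix.mul_smul, Matrix.mul_one]
  rw [heq, Matrix.trace_sub, Matrix.trace_smul] at h
  simp only [smul_eq_mul] at h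
  linarith
end Aux

section Aux
variable {d s : ℕ}

noncomputable def rankOneM (B : ℝ) (x : Fin d → ℝ) : Matrix (Fin d) (Fin d) ℝ :=
  1 - B⁻¹ • Matrix.of (fun i j => x i * x j)

lemma rankOneM_transpose (B : ℝ) (x : Fin d → ℝ) : (rankOneM B x)ᵀ = rankOneM B x := by
  unfold rankOneM
  rw [Matrix.transpose_sub, Matrix.transpose_one, Matrix.transpose_smul]
  congr 1
  ext i j
  simp [mul_comm]

lemma rankOneM_mulVec (B : ℝ) (x u : Fin d → ℝ) (h : ∑ j, x j * u j = 0) :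
    rankOneM B x *ᵥ u = u := by
  funext i
  simp only [rankOneM, Matrix.sub_mulVec, Matrix.one_mulVec, Matrix.smul_mulVec,
    Pi.sub_apply, Pi.smul_apply, smul_eq_mul]
  have : (Matrix.of (fun i j => x i * x j) *ᵥ u) i = x i * ∑ j, x j * u j := by
    simp [Matrix.mulVec, dotProduct, Finset.mul_sum, mul_assoc]
  rw [this, h]
  ring

lemma rankOneM_abs_le {B : ℝ} (hB : 0 < B) {x : Fin d → ℝ} (hx : ∑ l, x l ^ 2 ≤ B)
    (i j : Fin d) : |rankOneM B x i j| ≤ 2 := by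
  have hxx : |x i * x j| ≤ B := by
    have h1 : x i ^ 2 ≤ B := le_trans (Finset.single_le_sum (f := fun l => x l ^ 2)
      (fun l _ => sq_nonneg _) (Finset.mem_univ i)) hx
    have h2 : x j ^ 2 ≤ B := le_trans (Finset.single_le_sum (f := fun l => x l ^ 2)
      (fun l _ => sq_nonneg _) (Finset.mem_univ j)) hx
    nlinarith [abs_nonneg (x i * x j), sq_abs (x i * x j), sq_nonneg (x i - x j),
      sq_nonneg (x i + x j)]
  have : |rankOneM B x i j| ≤ |(1 : Matrix (Fin d) (Fin d) ℝ) i j| + |B⁻¹ * (x i * x j)| := by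
    simp only [rankOneM, Matrix.sub_apply, Matrix.smul_apply, Matrix.of_apply, smul_eq_mul]
    exact abs_sub _ _
  have h1 : |(1 : Matrix (Fin d) (Fin d) ℝ) i j| ≤ 1 := by
    by_cases h : i = j <;> simp [h, Matrix.one_apply]
  have h2 : |B⁻¹ * (x i * x j)| ≤ 1 := by
    rw [abs_mul, abs_of_pos (inv_pos.mpr hB)]
    rw [inv_mul_le_iff₀ hB]
    simpa using hxx
  linarith

noncomputable def QmatAux (B : ℝ) (s' : ℕ) : ℕ → (Fin s' → (Fin d → ℝ)) → Matrix (Fin d) (Fin d) ℝ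
  | 0, _ => 1
  | (k+1), v => if h : k < s' then QmatAux B s' k v * rankOneM B (v ⟨k, h⟩) else QmatAux B s' k v

lemma QmatAux_succ (B : ℝ) {s' : ℕ} (k : ℕ) (h : k < s') (v : Fin s' → (Fin d → ℝ)) :
    QmatAux B s' (k+1) v = QmatAux B s' k v * rankOneM B (v ⟨k,h⟩) := by
  conv_lhs => unfold QmatAux
  rw [dif_pos h]

lemma QmatAux_congr (B : ℝ) (k : ℕ) (v w : Fin s → (Fin d → ℝ))
    (h : ∀ i : Fin s, (i : ℕ) < k → v i = w i) : QmatAux B s k v = QmatAux B s k w := by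
  induction k with
  | zero => rfl
  | succ k ih =>
    unfold QmatAux
    have hih := ih (fun i hi => h i (Nat.lt_succ_of_lt hi))
    by_cases hk : k < s
    · simp only [dif_pos hk, hih, h ⟨k, hk⟩ (Nat.lt_succ_self k)]
    · simp only [dif_neg hk, hih]

lemma QmatAux_measurable (B : ℝ) (k : ℕ) (i j : Fin d) :
    Measurable (fun v : Fin s → (Fin d → ℝ) => QmatAux B s k v i j) := by
  induction k generalizing i j with
  | zero => simpa [QmatAux] using measurable_const
  | succ k ih =>
    unfold QmatAux
    by_cases hk : k < s
    · simp only [dif_pos hk, Matrix.mul_apply]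
      apply Finset.measurable_sum
      intro l _
      apply Measurable.mul (ih i l)
      have hv : Measurable (fun v : Fin s → (Fin d → ℝ) => v ⟨k, hk⟩) := measurable_pi_apply _
      have : Measurable (fun v : Fin s → (Fin d → ℝ) =>
          rankOneM B (v ⟨k, hk⟩) l j) := by
        simp only [rankOneM, Matrix.sub_apply, Matrix.smul_apply, Matrix.of_apply, smul_eq_mul]
        apply Measurable.sub measurable_const
        apply Measurable.mul measurable_const
        exact ((measurable_pi_apply l).comp hv).mul ((measurable_pi_apply j).comp hv)
      exact this
    · simp only [dif_neg hk]; exact ih i j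

lemma QmatAux_bound {B : ℝ} (hB : 0 < B) (k : ℕ) (v : Fin s → (Fin d → ℝ))
    (hv : ∀ t : Fin s, ∑ l, (v t l) ^ 2 ≤ B) (i j : Fin d) :
    |QmatAux B s k v i j| ≤ (2 * (d:ℝ)) ^ k := by
  induction k generalizing i j with
  | zero =>
    by_cases h : i = j <;> simp [QmatAux, h, Matrix.one_apply]
  | succ k ih =>
    unfold QmatAux
    by_cases hk : k < s
    · simp only [dif_pos hk, Matrix.mul_apply]
      calc |∑ l, QmatAux B s k v i l * rankOneM B (v ⟨k, hk⟩) l j|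
          ≤ ∑ l, |QmatAux B s k v i l * rankOneM B (v ⟨k, hk⟩) l j| :=
            Finset.abs_sum_le_sum_abs _ _
        _ ≤ ∑ _l : Fin d, ((2 * (d:ℝ)) ^ k * 2) := by
            apply Finset.sum_le_sum
            intro l _
            rw [abs_mul]
            apply mul_le_mul (ih i l) (rankOneM_abs_le hB (hv _) l j) (abs_nonneg _)
            positivity
        _ = d * ((2 * (d:ℝ)) ^ k * 2) := by simp [mul_comm]
        _ ≤ (2 * (d:ℝ)) ^ (k + 1) := by rw [pow_succ]; nlinarith [pow_nonneg (by positivity : (0:ℝ) ≤ 2 * d) k]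
    · simp only [dif_neg hk]
      calc |QmatAux B s k v i j| ≤ (2 * (d:ℝ)) ^ k := ih i j
        _ ≤ (2 * (d:ℝ)) ^ (k + 1) := by
            by_cases hd : d = 0
            · subst hd; exact absurd i.2 (by simp)
            · have hd1 : (1:ℕ) ≤ d := Nat.one_le_iff_ne_zero.mpr hd
              have hd1' : (1:ℝ) ≤ (d:ℝ) := by exact_mod_cast hd1
              have : (1:ℝ) ≤ 2 * d := by linarith
              calc ((2:ℝ) * d) ^ k ≤ (2*d)^k * (2*d) := le_mul_of_one_le_right (by positivity) this
                _ = (2*d)^(k+1) := (pow_succ _ _).symm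
end Aux

section Aux2
variable {d : ℕ}

lemma one_le_trace_transpose_mul {Q : Matrix (Fin d) (Fin d) ℝ} {u : Fin d → ℝ}
    (hu : ∑ i, u i ^ 2 = 1) (hQu : Q *ᵥ u = u) : 1 ≤ (Qᵀ * Q).trace := by
  have htr : (Qᵀ * Q).trace = ∑ i, ∑ j, Q j i ^ 2 := by
    simp [Matrix.trace, Matrix.diag, Matrix.mul_apply, sq]
  have key : ∀ j : Fin d, ((Q *ᵥ u) j) ^ 2 ≤ ∑ i, Q j i ^ 2 := by
    intro j
    have h := Finset.sum_mul_sq_le_sq_mul_sq Finset.univ (fun i => Q j i) u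
    have hmv : (Q *ᵥ u) j = ∑ i, Q j i * u i := by simp [Matrix.mulVec, dotProduct]
    rw [hmv]
    calc (∑ i, Q j i * u i) ^ 2 ≤ (∑ i, Q j i ^ 2) * ∑ i, u i ^ 2 := h
      _ = ∑ i, Q j i ^ 2 := by rw [hu, mul_one]
  calc (1:ℝ) = ∑ j, u j ^ 2 := hu.symm
    _ = ∑ j, ((Q *ᵥ u) j) ^ 2 := by rw [hQu]
    _ ≤ ∑ j, ∑ i, Q j i ^ 2 := Finset.sum_le_sum fun j _ => key j
    _ = (Qᵀ * Q).trace := by rw [htr, Finset.sum_comm]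

lemma rankOneM_sq (B : ℝ) (x : Fin d → ℝ) :
    rankOneM B x * rankOneM B x
      = 1 - (2 * B⁻¹) • Matrix.of (fun i j => x i * x j)
          + (B⁻¹ * B⁻¹ * ∑ l, x l ^ 2) • Matrix.of (fun i j => x i * x j) := by
  have h1 : Matrix.of (fun i j => x i * x j) * Matrix.of (fun i j => x i * x j)
      = (∑ l, x l ^ 2) • Matrix.of (fun i j : Fin d => x i * x j) := by
    ext i j
    simp only [Matrix.mul_apply, Matrix.of_apply, Matrix.smul_apply, smul_eq_mul,
      Finset.sum_mul]
    exact Finset.sum_congr rfl fun l _ => by ring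
  unfold rankOneM
  simp only [sub_mul, mul_sub, one_mul, mul_one, Matrix.smul_mul, Matrix.mul_smul, smul_smul, h1]
  module
end Aux2

section Aux4
variable {d : ℕ} {Ω : Type*} [MeasurableSpace Ω]

lemma dotProduct_integral_matrix (μ : Measure Ω) (F : Ω → Matrix (Fin d) (Fin d) ℝ)
    (hint : ∀ i j, Integrable (fun ω => F ω i j) μ) (u : Fin d → ℝ) :
    u ⬝ᵥ ((Matrix.of fun i j => ∫ ω, F ω i j ∂μ) *ᵥ u) = ∫ ω, u ⬝ᵥ (F ω *ᵥ u) ∂μ := by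
  have hrhs : ∀ ω, u ⬝ᵥ (F ω *ᵥ u) = ∑ i, ∑ j, u i * (F ω i j * u j) := by
    intro ω
    simp only [dotProduct, Matrix.mulVec, Finset.mul_sum]
  have hterm : ∀ i j, Integrable (fun ω => u i * (F ω i j * u j)) μ := fun i j => by
    simpa [mul_assoc] using ((hint i j).const_mul (u i)).mul_const (u j)
  simp only [hrhs]
  rw [integral_finset_sum _ (fun i _ => integrable_finset_sum _ (fun j _ => hterm i j))]
  simp only [dotProduct, Matrix.mulVec, Matrix.of_apply, Finset.mul_sum]
  refine Finset.sum_congr rfl fun i _ => ?_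
  rw [integral_finset_sum _ (fun j _ => hterm i j)]
  refine Finset.sum_congr rfl fun j _ => ?_
  rw [show (fun ω => u i * (F ω i j * u j)) = (fun ω => (u i * u j) * F ω i j) by funext ω; ring]
  rw [integral_const_mul]
  ring

lemma integral_matrix_psd (μ : Measure Ω) (F : Ω → Matrix (Fin d) (Fin d) ℝ)
    (hpsd : ∀ ω, (F ω).PosSemidef) (hint : ∀ i j, Integrable (fun ω => F ω i j) μ) :
    (Matrix.of fun i j => ∫ ω, F ω i j ∂μ).PosSemidef := by
  refine Matrix.PosSemidef.of_dotProduct_mulVec_nonneg ?_ ?_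
  · ext i j
    simp only [Matrix.conjTranspose_apply, Matrix.of_apply, star_trivial]
    congr 1
    funext ω
    have := (hpsd ω).1
    calc F ω j i = (F ω)ᴴ j i := by rw [this]
      _ = F ω i j := by simp [Matrix.conjTranspose_apply]
  · intro u
    simp only [star_trivial]
    rw [dotProduct_integral_matrix μ F hint u]
    apply integral_nonneg
    intro ω
    simpa using (hpsd ω).dotProduct_mulVec_nonneg u

lemma quad_xxT (v u : Fin d → ℝ) :
    u ⬝ᵥ (Matrix.of (fun i j => v i * v j) *ᵥ u) = (∑ i, v i * u i) ^ 2 := by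
  simp only [dotProduct, Matrix.mulVec, Matrix.of_apply]
  have : ∀ i, (∑ j, v i * v j * u j) = v i * ∑ j, v j * u j := by
    intro i; rw [Finset.mul_sum]; exact Finset.sum_congr rfl fun j _ => by ring
  calc ∑ i, u i * ∑ j, (fun j => v i * v j) j * u j
      = ∑ i, (v i * u i) * ∑ j, v j * u j := by
        refine Finset.sum_congr rfl fun i _ => ?_
        simp only
        rw [this i]; ring
    _ = (∑ i, v i * u i) * ∑ j, v j * u j := by rw [← Finset.sum_mul]
    _ = (∑ i, v i * u i) ^ 2 := by ring

lemma quad_rankOneM_sq (B : ℝ) (v u : Fin d → ℝ) :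
    u ⬝ᵥ ((rankOneM B v * rankOneM B v) *ᵥ u)
      = (∑ i, u i ^ 2) - 2 * B⁻¹ * (∑ i, v i * u i) ^ 2
        + B⁻¹ * B⁻¹ * (∑ l, v l ^ 2) * (∑ i, v i * u i) ^ 2 := by
  rw [rankOneM_sq]
  rw [Matrix.add_mulVec, Matrix.sub_mulVec, dotProduct_add, dotProduct_sub,
    Matrix.smul_mulVec, Matrix.smul_mulVec, dotProduct_smul,
    dotProduct_smul, Matrix.one_mulVec]
  have h1 : u ⬝ᵥ u = ∑ i, u i ^ 2 := by simp [dotProduct, sq]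
  rw [h1, quad_xxT]
  simp only [smul_eq_mul] <;> ring
end Aux4

section Aux3
variable {d : ℕ}

lemma psd_sub_smul_one {Sig : Matrix (Fin d) (Fin d) ℝ} (hHerm : Sig.IsHermitian) {lam : ℝ}
    (h : ∀ i, lam ≤ hHerm.eigenvalues i) :
    (Sig - lam • (1 : Matrix (Fin d) (Fin d) ℝ)).PosSemidef := by
  classical
  set U : Matrix (Fin d) (Fin d) ℝ := (hHerm.eigenvectorUnitary : Matrix (Fin d) (Fin d) ℝ)
  have hU : U * star U = 1 := (Matrix.mem_unitaryGroup_iff).mp hHerm.eigenvectorUnitary.2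
  have hdiag : Sig - lam • 1
      = U * (Matrix.diagonal (fun i => hHerm.eigenvalues i - lam)) * star U := by
    have hst := hHerm.spectral_theorem
    rw [Unitary.conjStarAlgAut_apply] at hst
    have h1 : Matrix.diagonal (fun i => hHerm.eigenvalues i - lam)
        = Matrix.diagonal (RCLike.ofReal ∘ hHerm.eigenvalues) - lam • 1 := by
      rw [Matrix.smul_one_eq_diagonal, Matrix.diagonal_sub]
      rfl
    rw [h1, Matrix.mul_sub, Matrix.sub_mul]
    rw [← hst]
    congr 1
    rw [Matrix.mul_smul, Matrix.smul_mul]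
    rw [Matrix.mul_one, hU]
  rw [hdiag]
  have : (Matrix.diagonal (fun i => hHerm.eigenvalues i - lam)).PosSemidef :=
    Matrix.posSemidef_diagonal_iff.mpr fun i => by linarith [h i]
  have := this.mul_mul_conjTranspose_same U
  rwa [← Matrix.star_eq_conjTranspose] at this

lemma quadform_ge_lam {Sig : Matrix (Fin d) (Fin d) ℝ} (hHerm : Sig.IsHermitian) {lam : ℝ}
    (h : ∀ i, lam ≤ hHerm.eigenvalues i) (u : Fin d → ℝ) :
    lam * ∑ i, u i ^ 2 ≤ u ⬝ᵥ Sig *ᵥ u := by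
  have hpsd := psd_sub_smul_one hHerm h
  have h2 := hpsd.dotProduct_mulVec_nonneg u
  simp only [star_trivial] at h2
  rw [Matrix.sub_mulVec, dotProduct_sub, Matrix.smul_mulVec,
    Matrix.one_mulVec, dotProduct_smul] at h2
  have : u ⬝ᵥ u = ∑ i, u i ^ 2 := by simp [dotProduct, sq]
  rw [this] at h2
  simp only [smul_eq_mul] at h2
  linarith

lemma trace_eq_sum_eigs {Sig : Matrix (Fin d) (Fin d) ℝ} (hHerm : Sig.IsHermitian) :
    Sig.trace = ∑ i, hHerm.eigenvalues i := by
  classical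
  set U : Matrix (Fin d) (Fin d) ℝ := (hHerm.eigenvectorUnitary : Matrix (Fin d) (Fin d) ℝ)
  have hU : star U * U = 1 := (Matrix.mem_unitaryGroup_iff').mp hHerm.eigenvectorUnitary.2
  conv_lhs => rw [hHerm.spectral_theorem, Unitary.conjStarAlgAut_apply]
  rw [Matrix.trace_mul_cycle]
  show (star U * U * Matrix.diagonal (RCLike.ofReal ∘ hHerm.eigenvalues)).trace = _
  rw [hU, one_mul, Matrix.trace_diagonal]
  rfl
end Aux3

lemma exists_unit_orthogonal {d : ℕ} (x : Set (Fin d → ℝ))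
    (h : Submodule.span ℝ x ≠ ⊤) :
    ∃ u : Fin d → ℝ, (∑ i, u i ^ 2) = 1 ∧ ∀ v ∈ x, ∑ i, v i * u i = 0 := by
  classical
  let L : (Fin d → ℝ) ≃ₗ[ℝ] EuclideanSpace ℝ (Fin d) :=
    (WithLp.linearEquiv 2 ℝ (Fin d → ℝ)).symm
  set W : Submodule ℝ (EuclideanSpace ℝ (Fin d)) := Submodule.span ℝ (L '' x) with hW
  have hWne : W ≠ ⊤ := by
    intro htop
    apply h
    have : Submodule.span ℝ (L '' x) = Submodule.map (L : (Fin d → ℝ) →ₗ[ℝ] _) (Submodule.span ℝ x) := by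
      rw [Submodule.map_span]
      rfl
    rw [hW, this] at htop
    rw [LinearMap.map_eq_top_iff L.range] at htop
    simpa using htop
  have hbot : Wᗮ ≠ ⊥ := by
    intro hb
    exact hWne (Submodule.orthogonal_eq_bot_iff.mp hb)
  obtain ⟨u0, hu0W, hu0ne⟩ := Submodule.ne_bot_iff _ |>.mp hbot
  set u1 : EuclideanSpace ℝ (Fin d) := ‖u0‖⁻¹ • u0 with hu1
  have hu1W : u1 ∈ Wᗮ := Submodule.smul_mem _ _ hu0W
  have hu1norm : ‖u1‖ = 1 := norm_smul_inv_norm hu0ne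
  refine ⟨fun i => u1 i, ?_, ?_⟩
  · have hinner : (inner ℝ u1 u1 : ℝ) = ∑ i, u1 i * u1 i := by
      simp only [PiLp.inner_apply, RCLike.inner_apply, conj_trivial]
    have : (inner ℝ u1 u1 : ℝ) = 1 := by
      rw [real_inner_self_eq_norm_sq, hu1norm]; norm_num
    rw [hinner] at this
    simpa [sq] using this
  · intro v hv
    have hvW : (L v) ∈ W := Submodule.subset_span ⟨v, hv, rfl⟩
    have := (Submodule.mem_orthogonal _ _).mp hu1W (L v) hvW
    have hinner : (inner ℝ (L v) u1 : ℝ) = ∑ i, v i * u1 i := by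
      simp [PiLp.inner_apply, RCLike.inner_apply, L]
      exact Finset.sum_congr rfl fun _ _ => mul_comm _ _
    rw [hinner] at this
    exact this

lemma measurable_rankOneM_entry {d : ℕ} (B : ℝ) (i j : Fin d) :
    Measurable fun v : Fin d → ℝ => rankOneM B v i j := by
  simp only [rankOneM, Matrix.sub_apply, Matrix.smul_apply, Matrix.of_apply, smul_eq_mul]
  exact measurable_const.sub (measurable_const.mul
    ((measurable_pi_apply i).mul (measurable_pi_apply j)))

lemma psd_transpose_mul_self {d : ℕ} (Q : Matrix (Fin d) (Fin d) ℝ) : (Qᵀ * Q).PosSemidef := by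
  have h := Matrix.posSemidef_conjTranspose_mul_self Q
  have he : Qᴴ = Qᵀ := by ext i j; simp [Matrix.conjTranspose_apply]
  rwa [he] at h

lemma mul_self_entry_symm {d : ℕ} {M : Matrix (Fin d) (Fin d) ℝ} (hM : Mᵀ = M) (i j : Fin d) :
    (M * M) j i = (M * M) i j := by
  have h : (M * M)ᵀ = M * M := by rw [Matrix.transpose_mul, hM]
  conv_lhs => rw [← h]
  simp [Matrix.transpose_apply]

set_option maxHeartbeats 2000000 in
theorem matrix_chernoff_span_consequence {d s : ℕ} {Ω : Type*} [MeasurableSpace Ω]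
    (μ : Measure Ω) [IsProbabilityMeasure μ]
    (X : Fin s → Ω → (Fin d → ℝ)) (hmeas : ∀ k, Measurable (X k))
    (hindep : iIndepFun X μ)
    (ν : Measure (Fin d → ℝ)) (hid : ∀ k, Measure.map (X k) μ = ν)
    (Sig : Matrix (Fin d) (Fin d) ℝ)
    (hSig : Sig = Matrix.of fun i j => ∫ v, v i * v j ∂ν)
    (hHerm : Sig.IsHermitian)
    (lam B : ℝ) (hlam : lam = ⨅ k, hHerm.eigenvalues k) (hlampos : 0 < lam)
    (hB : ∀ᵐ v ∂ν, ∑ i, (v i) ^ 2 ≤ B) :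
    (μ {ω | Submodule.span ℝ (Set.range fun k => X k ω) ≠ ⊤}).toReal ≤
      d * Real.exp (-(lam * s) / (2 * B)) := by
  classical
  rcases Nat.eq_zero_or_pos d with hd0 | hdpos
  · exfalso
    subst hd0
    rw [Real.iInf_of_isEmpty] at hlam
    exact lt_irrefl 0 (hlam ▸ hlampos)
  have hd1 : (1:ℝ) ≤ (d:ℝ) := by exact_mod_cast hdpos
  rcases Nat.eq_zero_or_pos s with hs0 | hspos
  · subst hs0
    calc (μ {ω | Submodule.span ℝ (Set.range fun k : Fin 0 => X k ω) ≠ ⊤}).toReal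
        ≤ (μ Set.univ).toReal :=
          ENNReal.toReal_mono (measure_ne_top _ _) (measure_mono (Set.subset_univ _))
      _ = 1 := by simp
      _ ≤ (d : ℝ) * Real.exp (-(lam * (0:ℕ)) / (2 * B)) := by
          simp only [Nat.cast_zero, mul_zero, neg_zero, zero_div, Real.exp_zero, mul_one]
          exact hd1
  haveI hνprob : IsProbabilityMeasure ν := by
    rw [← hid ⟨0, hspos⟩]
    exact Measure.isProbabilityMeasure_map (hmeas _).aemeasurable
  have hlamle : ∀ i, lam ≤ hHerm.eigenvalues i := by
    intro i; rw [hlam]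
    exact ciInf_le (Finite.bddBelow_range _) i
  have habs : ∀ (v : Fin d → ℝ), (∑ l, v l ^ 2 ≤ B) → ∀ i j, |v i * v j| ≤ B := by
    intro v hv i j
    have h1 : v i ^ 2 ≤ B := le_trans (Finset.single_le_sum (f := fun l => v l ^ 2)
      (fun l _ => sq_nonneg _) (Finset.mem_univ i)) hv
    have h2 : v j ^ 2 ≤ B := le_trans (Finset.single_le_sum (f := fun l => v l ^ 2)
      (fun l _ => sq_nonneg _) (Finset.mem_univ j)) hv
    nlinarith [abs_nonneg (v i * v j), sq_abs (v i * v j), sq_nonneg (v i - v j),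
      sq_nonneg (v i + v j)]
  have hint_entry : ∀ i j, Integrable (fun v : Fin d → ℝ => v i * v j) ν := by
    intro i j
    refine Integrable.mono' (integrable_const B)
      (((measurable_pi_apply i).mul (measurable_pi_apply j)).aestronglyMeasurable) ?_
    filter_upwards [hB] with v hv
    rw [Real.norm_eq_abs]; exact habs v hv i j
  have htrace_sig : Sig.trace ≤ B := by
    have h1 : Sig.trace = ∫ v, ∑ i, v i ^ 2 ∂ν := by
      have h2 : Sig.trace = ∑ i, ∫ v, v i * v i ∂ν := by
        rw [hSig]; simp [Matrix.trace, Matrix.diag]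
      rw [h2, ← integral_finset_sum _ (fun i _ => hint_entry i i)]
      congr 1; funext v
      exact Finset.sum_congr rfl fun i _ => (sq (v i)).symm ▸ by ring
    rw [h1]
    calc ∫ v, ∑ i, v i ^ 2 ∂ν ≤ ∫ _v, B ∂ν := by
          apply integral_mono_ae
          · exact integrable_finset_sum _ (fun i _ => by
              simpa [sq] using hint_entry i i)
          · exact integrable_const B
          · exact hB
      _ = B := by simp
  have hsum_eig : lam * d ≤ Sig.trace := by
    rw [trace_eq_sum_eigs hHerm]
    calc lam * d = ∑ _i : Fin d, lam := by
          rw [Finset.sum_const, Finset.card_univ, Fintype.card_fin, nsmul_eq_mul]; ring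
      _ ≤ ∑ i, hHerm.eigenvalues i := Finset.sum_le_sum fun i _ => hlamle i
  have hlamB : lam ≤ B := by nlinarith
  have hBpos : 0 < B := lt_of_lt_of_le hlampos hlamB
  set c : ℝ := 1 - lam / B with hc
  have hc0 : 0 ≤ c := by
    have : lam / B ≤ 1 := (div_le_one hBpos).mpr hlamB
    rw [hc]; linarith
  -- a.e. bound on the samples
  have hGood : ∀ᵐ ω ∂μ, ∀ t : Fin s, ∑ l, (X t ω l) ^ 2 ≤ B := by
    rw [ae_all_iff]
    intro t
    have hset : MeasurableSet {v : Fin d → ℝ | ∑ l, v l ^ 2 ≤ B} :=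
      measurableSet_le (Finset.measurable_sum _ fun l _ => (measurable_pi_apply l).pow_const 2)
        measurable_const
    have h := hB; rw [← hid t] at h
    exact (MeasureTheory.ae_map_iff (hmeas t).aemeasurable hset).mp h
  have hXX : Measurable (fun ω (i : Fin s) => X i ω) := measurable_pi_lambda _ fun i => hmeas i
  set Q : ℕ → Ω → Matrix (Fin d) (Fin d) ℝ := fun k ω => QmatAux B s k (fun i => X i ω) with hQ
  have hQmeas : ∀ k i j, Measurable fun ω => Q k ω i j := fun k i j =>
    (QmatAux_measurable B k i j).comp hXX
  have hQbd : ∀ k, ∀ᵐ ω ∂μ, ∀ i j, |Q k ω i j| ≤ (2*(d:ℝ)) ^ k := by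
    intro k; filter_upwards [hGood] with ω hω i j
    exact QmatAux_bound hBpos k _ hω i j
  have hbdd_int : ∀ (f : Ω → ℝ) (C : ℝ), Measurable f → (∀ᵐ ω ∂μ, |f ω| ≤ C) →
      Integrable f μ := by
    intro f C hm hb
    refine Integrable.mono' (integrable_const C) hm.aestronglyMeasurable ?_
    filter_upwards [hb] with ω h; rwa [Real.norm_eq_abs]
  have hRmeas : ∀ k i j, Measurable fun ω => ((Q k ω)ᵀ * Q k ω) i j := by
    intro k i j
    simp only [Matrix.mul_apply, Matrix.transpose_apply]
    exact Finset.measurable_sum _ fun l _ => (hQmeas k l i).mul (hQmeas k l j)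
  have hRbd : ∀ k, ∀ᵐ ω ∂μ, ∀ i j, |((Q k ω)ᵀ * Q k ω) i j| ≤ d * ((2*(d:ℝ))^k * (2*(d:ℝ))^k) := by
    intro k; filter_upwards [hQbd k] with ω hω i j
    calc |((Q k ω)ᵀ * Q k ω) i j| = |∑ l, Q k ω l i * Q k ω l j| := by
          simp [Matrix.mul_apply, Matrix.transpose_apply]
      _ ≤ ∑ l, |Q k ω l i * Q k ω l j| := Finset.abs_sum_le_sum_abs _ _
      _ ≤ ∑ _l : Fin d, ((2*(d:ℝ))^k * (2*(d:ℝ))^k) := by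
          apply Finset.sum_le_sum; intro l _
          rw [abs_mul]
          exact mul_le_mul (hω l i) (hω l j) (abs_nonneg _) (by positivity)
      _ = d * ((2*(d:ℝ))^k * (2*(d:ℝ))^k) := by simp [mul_comm]
  have hRint : ∀ k i j, Integrable (fun ω => ((Q k ω)ᵀ * Q k ω) i j) μ := fun k i j =>
    hbdd_int _ _ (hRmeas k i j) (by filter_upwards [hRbd k] with ω h; exact h i j)
  -- the ν-side matrix N
  have hAAνmeas : ∀ i j, Measurable fun v : Fin d → ℝ => (rankOneM B v * rankOneM B v) i j := by
    intro i j
    simp only [Matrix.mul_apply]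
    exact Finset.measurable_sum _ fun l _ =>
      (measurable_rankOneM_entry B i l).mul (measurable_rankOneM_entry B l j)
  have hAAptw : ∀ v : Fin d → ℝ, (∑ l, v l ^ 2 ≤ B) → ∀ i j,
      |(rankOneM B v * rankOneM B v) i j| ≤ (d:ℝ) * 4 := by
    intro v hv i j
    calc |(rankOneM B v * rankOneM B v) i j| = |∑ l, rankOneM B v i l * rankOneM B v l j| := by
          simp [Matrix.mul_apply]
      _ ≤ ∑ l, |rankOneM B v i l * rankOneM B v l j| := Finset.abs_sum_le_sum_abs _ _
      _ ≤ ∑ _l : Fin d, (4:ℝ) := by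
          apply Finset.sum_le_sum; intro l _
          rw [abs_mul]
          have h1 := rankOneM_abs_le hBpos hv i l
          have h2 := rankOneM_abs_le hBpos hv l j
          nlinarith [abs_nonneg (rankOneM B v i l), abs_nonneg (rankOneM B v l j)]
      _ = d * 4 := by simp [mul_comm]
  have hAAνint : ∀ i j, Integrable (fun v => (rankOneM B v * rankOneM B v) i j) ν := by
    intro i j
    refine Integrable.mono' (integrable_const ((d:ℝ)*4)) (hAAνmeas i j).aestronglyMeasurable ?_
    filter_upwards [hB] with v hv
    rw [Real.norm_eq_abs]; exact hAAptw v hv i j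
  set Nmat : Matrix (Fin d) (Fin d) ℝ :=
    Matrix.of (fun i j => ∫ v, (rankOneM B v * rankOneM B v) i j ∂ν) with hN
  -- ∫ (∑ v i u i)^2 = u ⬝ᵥ Sig *ᵥ u
  have hSigQuad : ∀ u : Fin d → ℝ, ∫ v, (∑ i, v i * u i)^2 ∂ν = u ⬝ᵥ Sig *ᵥ u := by
    intro u
    have hexp : ∀ v : Fin d → ℝ, (∑ i, v i * u i)^2 = ∑ i, ∑ j, (u i * u j) * (v i * v j) := by
      intro v
      rw [sq, Finset.sum_mul_sum]
      exact Finset.sum_congr rfl fun i _ => Finset.sum_congr rfl fun j _ => by ring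
    simp only [hexp]
    rw [integral_finset_sum _ (fun i _ => integrable_finset_sum _ (fun j _ =>
      (hint_entry i j).const_mul _))]
    have : ∀ i, ∫ v, ∑ j, (u i * u j) * (v i * v j) ∂ν = ∑ j, (u i * u j) * ∫ v, v i * v j ∂ν := by
      intro i
      rw [integral_finset_sum _ (fun j _ => (hint_entry i j).const_mul _)]
      exact Finset.sum_congr rfl fun j _ => integral_const_mul _ _
    simp only [this]
    rw [hSig]
    simp only [dotProduct, Matrix.mulVec, Matrix.of_apply]
    refine Finset.sum_congr rfl fun i _ => ?_
    rw [Finset.mul_sum]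
    exact Finset.sum_congr rfl fun j _ => by ring
  -- key PSD bound for N
  have hNpsd : (c • (1 : Matrix (Fin d) (Fin d) ℝ) - Nmat).PosSemidef := by
    refine Matrix.PosSemidef.of_dotProduct_mulVec_nonneg ?_ ?_
    · ext i j
      simp only [Matrix.conjTranspose_apply, Matrix.sub_apply, Matrix.smul_apply,
        Matrix.of_apply, star_trivial, smul_eq_mul, hN]
      have hsym : (∫ v, (rankOneM B v * rankOneM B v) j i ∂ν)
          = ∫ v, (rankOneM B v * rankOneM B v) i j ∂ν := by
        apply integral_congr_ae
        filter_upwards with v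
        exact mul_self_entry_symm (rankOneM_transpose B v) i j
      rw [hsym]
      congr 1
      simp [Matrix.one_apply, eq_comm]
    · intro u
      simp only [star_trivial]
      rw [Matrix.sub_mulVec, dotProduct_sub, Matrix.smul_mulVec,
        dotProduct_smul, Matrix.one_mulVec]
      have huu : u ⬝ᵥ u = ∑ i, u i ^ 2 := by simp [dotProduct, sq]
      have hNu : u ⬝ᵥ (Nmat *ᵥ u) ≤ c * ∑ i, u i ^ 2 := by
        rw [hN, dotProduct_integral_matrix ν _ hAAνint u]
        have hintq : Integrable (fun v => u ⬝ᵥ ((rankOneM B v * rankOneM B v) *ᵥ u)) ν := by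
          have heq : (fun v => u ⬝ᵥ ((rankOneM B v * rankOneM B v) *ᵥ u))
              = fun v => ∑ i, ∑ j, u i * ((rankOneM B v * rankOneM B v) i j * u j) := by
            funext v
            simp only [dotProduct, Matrix.mulVec, Finset.mul_sum]
          rw [heq]
          exact integrable_finset_sum _ (fun i _ => integrable_finset_sum _ (fun j _ => by
            simpa [mul_assoc] using ((hAAνint i j).const_mul (u i)).mul_const (u j)))
        have hintw : Integrable (fun v : Fin d → ℝ => (∑ i, v i * u i)^2) ν := by
          have heq : (fun v : Fin d → ℝ => (∑ i, v i * u i)^2)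
              = fun v => ∑ i, ∑ j, (u i * u j) * (v i * v j) := by
            funext v
            rw [sq, Finset.sum_mul_sum]
            exact Finset.sum_congr rfl fun i _ => Finset.sum_congr rfl fun j _ => by ring
          rw [heq]
          exact integrable_finset_sum _ (fun i _ => integrable_finset_sum _ (fun j _ =>
            (hint_entry i j).const_mul _))
        have hintrhs : Integrable
            (fun v : Fin d → ℝ => (∑ i, u i ^ 2) - B⁻¹ * (∑ i, v i * u i)^2) ν :=
          (integrable_const _).sub (hintw.const_mul _)
        have hptwise : ∀ᵐ v ∂ν, u ⬝ᵥ ((rankOneM B v * rankOneM B v) *ᵥ u)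
            ≤ (∑ i, u i ^ 2) - B⁻¹ * (∑ i, v i * u i)^2 := by
          filter_upwards [hB] with v hv
          rw [quad_rankOneM_sq]
          have hBinv : B⁻¹ * B = 1 := inv_mul_cancel₀ hBpos.ne'
          have hw : (0:ℝ) ≤ (∑ i, v i * u i)^2 := sq_nonneg _
          have hiv : (0:ℝ) < B⁻¹ := inv_pos.mpr hBpos
          have h3 : B⁻¹ * (∑ l, v l ^ 2) ≤ 1 := by
            calc B⁻¹ * (∑ l, v l ^ 2) ≤ B⁻¹ * B := by
                  apply mul_le_mul_of_nonneg_left hv hiv.le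
              _ = 1 := hBinv
          nlinarith [mul_le_mul_of_nonneg_right h3 (mul_nonneg hiv.le hw)]
        calc ∫ v, u ⬝ᵥ ((rankOneM B v * rankOneM B v) *ᵥ u) ∂ν
            ≤ ∫ v, ((∑ i, u i ^ 2) - B⁻¹ * (∑ i, v i * u i)^2) ∂ν :=
              integral_mono_ae hintq hintrhs hptwise
          _ = (∑ i, u i ^ 2) - B⁻¹ * ∫ v, (∑ i, v i * u i)^2 ∂ν := by
              rw [integral_sub (integrable_const _) (hintw.const_mul _)]
              simp [integral_const_mul]
          _ ≤ (∑ i, u i ^ 2) - B⁻¹ * (lam * ∑ i, u i ^ 2) := by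
              rw [hSigQuad u]
              have hq := quadform_ge_lam hHerm hlamle u
              have hiv : (0:ℝ) ≤ B⁻¹ := le_of_lt (inv_pos.mpr hBpos)
              nlinarith [mul_le_mul_of_nonneg_left hq hiv]
          _ = c * ∑ i, u i ^ 2 := by
              rw [hc]; field_simp
      rw [huu]
      simp only [smul_eq_mul]
      linarith
  -- the trace process
  have hIg0 : (∫ ω, ((Q 0 ω)ᵀ * Q 0 ω).trace ∂μ) = d := by
    have : ∀ ω, ((Q 0 ω)ᵀ * Q 0 ω).trace = (d:ℝ) := by
      intro ω
      show ((QmatAux B s 0 (fun i => X i ω))ᵀ * QmatAux B s 0 (fun i => X i ω)).trace = (d:ℝ)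
      simp [QmatAux, Matrix.trace_one]
    simp only [this]
    simp
  have hstep : ∀ k, k < s →
      (∫ ω, ((Q (k+1) ω)ᵀ * Q (k+1) ω).trace ∂μ) ≤ c * ∫ ω, ((Q k ω)ᵀ * Q k ω).trace ∂μ := by
    intro k hk
    set kk : Fin s := ⟨k, hk⟩ with hkk
    have hQsucc : ∀ ω, Q (k+1) ω = Q k ω * rankOneM B (X kk ω) := by
      intro ω
      exact QmatAux_succ B k hk (fun i => X i ω)
    have hAAmeas : ∀ l m, Measurable fun ω =>
        (rankOneM B (X kk ω) * rankOneM B (X kk ω)) l m :=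
      fun l m => (hAAνmeas l m).comp (hmeas kk)
    have hAAint : ∀ l m, Integrable (fun ω =>
        (rankOneM B (X kk ω) * rankOneM B (X kk ω)) l m) μ := by
      intro l m
      apply hbdd_int _ ((d:ℝ)*4) (hAAmeas l m)
      filter_upwards [hGood] with ω hω
      exact hAAptw _ (hω kk) l m
    have hmap : ∀ l m, (∫ ω, (rankOneM B (X kk ω) * rankOneM B (X kk ω)) l m ∂μ) = Nmat l m := by
      intro l m
      have h2 : ∫ v, (rankOneM B v * rankOneM B v) l m ∂ν
          = ∫ ω, (rankOneM B (X kk ω) * rankOneM B (X kk ω)) l m ∂μ := by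
        rw [← hid kk, integral_map (hmeas kk).aemeasurable (hAAνmeas l m).aestronglyMeasurable]
      rw [hN]
      simp only [Matrix.of_apply]
      exact h2.symm
    set SS : Finset (Fin s) := Finset.univ.filter (fun i => (i:ℕ) < k) with hSS
    have hdisj : Disjoint SS {kk} := by
      rw [Finset.disjoint_singleton_right]
      simp [hSS, hkk]
    have hIndep0 := hindep.indepFun_finset SS {kk} hdisj hmeas
    have hindepe : ∀ i j l m, IndepFun (fun ω => ((Q k ω)ᵀ * Q k ω) i j)
        (fun ω => (rankOneM B (X kk ω) * rankOneM B (X kk ω)) l m) μ := by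
      intro i j l m
      set φ : (↥SS → (Fin d → ℝ)) → ℝ := fun t =>
        ((QmatAux B s k (fun r => if h : r ∈ SS then t ⟨r,h⟩ else 0))ᵀ *
          QmatAux B s k (fun r => if h : r ∈ SS then t ⟨r,h⟩ else 0)) i j with hφ
      set ψ : (↥({kk} : Finset (Fin s)) → (Fin d → ℝ)) → ℝ := fun t =>
        (rankOneM B (t ⟨kk, Finset.mem_singleton_self kk⟩) *
          rankOneM B (t ⟨kk, Finset.mem_singleton_self kk⟩)) l m with hψ
      have hext : Measurable (fun (t : ↥SS → (Fin d → ℝ)) (r : Fin s) =>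
          if h : r ∈ SS then t ⟨r,h⟩ else 0) := by
        apply measurable_pi_lambda
        intro r
        by_cases h : r ∈ SS
        · simpa [h] using measurable_pi_apply (⟨r, h⟩ : {x // x ∈ SS})
        · simpa [h] using measurable_const
      have hφm : Measurable φ := by
        rw [hφ]
        simp only [Matrix.mul_apply, Matrix.transpose_apply]
        exact Finset.measurable_sum _ fun l' _ =>
          ((QmatAux_measurable B k l' i).comp hext).mul ((QmatAux_measurable B k l' j).comp hext)
      have hψm : Measurable ψ :=
        (hAAνmeas l m).comp (measurable_pi_apply _)
      have hcomp := hIndep0.comp hφm hψm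
      have h1 : (fun ω => ((Q k ω)ᵀ * Q k ω) i j)
          = φ ∘ (fun a (i : ↥SS) => X i a) := by
        funext ω
        simp only [Function.comp_apply, hφ]
        have hcongr : QmatAux B s k (fun r => if h : r ∈ SS then X r ω else 0)
            = QmatAux B s k (fun i => X i ω) :=
          QmatAux_congr _ _ _ _ (fun r hr => by
            rw [dif_pos (by simp [hSS, hr])])
        rw [hcongr]
      have h2 : (fun ω => (rankOneM B (X kk ω) * rankOneM B (X kk ω)) l m)
          = ψ ∘ (fun a (i : ↥({kk} : Finset (Fin s))) => X i a) := rfl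
      rw [h1, h2]
      exact hcomp
    have hprod_int : ∀ i j l m, Integrable (fun ω =>
        ((Q k ω)ᵀ * Q k ω) i j * (rankOneM B (X kk ω) * rankOneM B (X kk ω)) l m) μ := by
      intro i j l m
      apply hbdd_int _ ((d * ((2*(d:ℝ))^k * (2*(d:ℝ))^k)) * ((d:ℝ)*4))
      · exact (hRmeas k i j).mul (hAAmeas l m)
      · filter_upwards [hRbd k, hGood] with ω h1 h2
        rw [abs_mul]
        apply mul_le_mul (h1 i j) (hAAptw _ (h2 kk) l m) (abs_nonneg _)
        positivity
    have htr : ∀ ω, ((Q (k+1) ω)ᵀ * Q (k+1) ω).trace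
        = ∑ i, ∑ j, ((Q k ω)ᵀ * Q k ω) i j *
            ((rankOneM B (X kk ω) * rankOneM B (X kk ω)) j i) := by
      intro ω
      rw [hQsucc ω]
      have haT : (rankOneM B (X kk ω))ᵀ = rankOneM B (X kk ω) := rankOneM_transpose _ _
      calc ((Q k ω * rankOneM B (X kk ω))ᵀ * (Q k ω * rankOneM B (X kk ω))).trace
          = ((rankOneM B (X kk ω))ᵀ * (((Q k ω)ᵀ * Q k ω) * rankOneM B (X kk ω))).trace := by
            rw [Matrix.transpose_mul, Matrix.mul_assoc, ← Matrix.mul_assoc ((Q k ω)ᵀ)]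
        _ = ((((Q k ω)ᵀ * Q k ω) * rankOneM B (X kk ω)) * (rankOneM B (X kk ω))ᵀ).trace :=
            Matrix.trace_mul_comm _ _
        _ = (((Q k ω)ᵀ * Q k ω) * (rankOneM B (X kk ω) * rankOneM B (X kk ω))).trace := by
            rw [haT, Matrix.mul_assoc]
        _ = ∑ i, ∑ j, ((Q k ω)ᵀ * Q k ω) i j *
              ((rankOneM B (X kk ω) * rankOneM B (X kk ω)) j i) := by
            simp [Matrix.trace, Matrix.diag, Matrix.mul_apply]
    calc (∫ ω, ((Q (k+1) ω)ᵀ * Q (k+1) ω).trace ∂μ)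
        = ∫ ω, ∑ i, ∑ j, ((Q k ω)ᵀ * Q k ω) i j *
            ((rankOneM B (X kk ω) * rankOneM B (X kk ω)) j i) ∂μ := by
          apply integral_congr_ae
          filter_upwards with ω
          exact htr ω
      _ = ∑ i, ∑ j, ∫ ω, ((Q k ω)ᵀ * Q k ω) i j *
            ((rankOneM B (X kk ω) * rankOneM B (X kk ω)) j i) ∂μ := by
          rw [integral_finset_sum _ (fun i _ =>
            integrable_finset_sum _ (fun j _ => hprod_int i j j i))]
          exact Finset.sum_congr rfl fun i _ =>
            integral_finset_sum _ (fun j _ => hprod_int i j j i)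
      _ = ∑ i, ∑ j, (∫ ω, ((Q k ω)ᵀ * Q k ω) i j ∂μ) * (Nmat j i) := by
          refine Finset.sum_congr rfl fun i _ => Finset.sum_congr rfl fun j _ => ?_
          rw [← hmap j i]
          exact (hindepe i j j i).integral_mul_eq_mul_integral (hRint k i j).aestronglyMeasurable (hAAint j i).aestronglyMeasurable
      _ = ((Matrix.of fun i j => ∫ ω, ((Q k ω)ᵀ * Q k ω) i j ∂μ) * Nmat).trace := by
          simp [Matrix.trace, Matrix.diag, Matrix.mul_apply]
      _ ≤ c * ((Matrix.of fun i j => ∫ ω, ((Q k ω)ᵀ * Q k ω) i j ∂μ)).trace := by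
          apply trace_mul_le_of_psd _ hNpsd
          exact integral_matrix_psd μ _ (fun ω => psd_transpose_mul_self (Q k ω)) (hRint k)
      _ = c * ∫ ω, ((Q k ω)ᵀ * Q k ω).trace ∂μ := by
          congr 1
          simp only [Matrix.trace, Matrix.diag, Matrix.of_apply]
          rw [← integral_finset_sum _ (fun i _ => hRint k i i)]
  have hIgle : ∀ k, k ≤ s → (∫ ω, ((Q k ω)ᵀ * Q k ω).trace ∂μ) ≤ d * c^k := by
    intro k
    induction k with
    | zero => intro _; simp [hIg0]
    | succ k ih =>
      intro hk
      have hk' : k < s := Nat.lt_of_succ_le hk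
      calc (∫ ω, ((Q (k+1) ω)ᵀ * Q (k+1) ω).trace ∂μ)
          ≤ c * ∫ ω, ((Q k ω)ᵀ * Q k ω).trace ∂μ := hstep k hk'
        _ ≤ c * (d * c^k) := mul_le_mul_of_nonneg_left (ih (le_of_lt hk')) hc0
        _ = d * c^(k+1) := by ring
  -- Markov / conclusion
  set f : Ω → ℝ := fun ω => ((Q s ω)ᵀ * Q s ω).trace with hf
  have hfmeas : Measurable f := by
    have : f = fun ω => ∑ i, ((Q s ω)ᵀ * Q s ω) i i := by
      funext ω; simp [hf, Matrix.trace, Matrix.diag]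
    rw [this]
    exact Finset.measurable_sum _ fun i _ => hRmeas s i i
  have hfnonneg : 0 ≤ᵐ[μ] f := by
    filter_upwards with ω
    have h := trace_mul_psd_nonneg (psd_transpose_mul_self (Q s ω))
      (Matrix.PosSemidef.one (n := Fin d) (R := ℝ))
    rw [Matrix.mul_one] at h
    exact h
  have hfint : Integrable f μ := by
    apply hbdd_int f (d * (d * ((2*(d:ℝ))^s * (2*(d:ℝ))^s))) hfmeas
    filter_upwards [hRbd s] with ω hω
    calc |f ω| = |∑ i, ((Q s ω)ᵀ * Q s ω) i i| := by simp [hf, Matrix.trace, Matrix.diag]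
      _ ≤ ∑ i, |((Q s ω)ᵀ * Q s ω) i i| := Finset.abs_sum_le_sum_abs _ _
      _ ≤ ∑ _i : Fin d, (d * ((2*(d:ℝ))^s * (2*(d:ℝ))^s)) :=
          Finset.sum_le_sum fun i _ => hω i i
      _ = d * (d * ((2*(d:ℝ))^s * (2*(d:ℝ))^s)) := by simp [mul_comm]
  have hsub : {ω | Submodule.span ℝ (Set.range fun k => X k ω) ≠ ⊤} ⊆ {ω | 1 ≤ f ω} := by
    intro ω hω
    obtain ⟨u, hu1, hu2⟩ := exists_unit_orthogonal _ hω
    have hQu : ∀ k, Q k ω *ᵥ u = u := by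
      intro k
      induction k with
      | zero =>
        show QmatAux B s 0 (fun i => X i ω) *ᵥ u = u
        simp [QmatAux, Matrix.one_mulVec]
      | succ k ih =>
        show QmatAux B s (k+1) (fun i => X i ω) *ᵥ u = u
        unfold QmatAux
        by_cases hk : k < s
        · rw [dif_pos hk, ← Matrix.mulVec_mulVec]
          rw [rankOneM_mulVec _ _ _ (hu2 (X ⟨k,hk⟩ ω) ⟨⟨k,hk⟩, rfl⟩)]
          exact ih
        · rw [dif_neg hk]; exact ih
    exact one_le_trace_transpose_mul hu1 (hQu s)
  have hmarkov : (μ {ω | 1 ≤ f ω}).toReal ≤ ∫ ω, f ω ∂μ := by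
    have h := mul_meas_ge_le_integral_of_nonneg hfnonneg hfint 1
    simpa [Measure.real] using h
  have hcle : c ≤ Real.exp (-(lam/(2*B))) := by
    have h1 : c ≤ Real.exp (-(lam/B)) := by
      have := Real.add_one_le_exp (-(lam/B))
      rw [hc]; linarith
    have h2 : Real.exp (-(lam/B)) ≤ Real.exp (-(lam/(2*B))) := by
      apply Real.exp_le_exp.mpr
      have : lam/(2*B) ≤ lam/B := by
        apply div_le_div_of_nonneg_left hlampos.le hBpos
        linarith
      linarith
    linarith
  calc (μ {ω | Submodule.span ℝ (Set.range fun k => X k ω) ≠ ⊤}).toReal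
      ≤ (μ {ω | 1 ≤ f ω}).toReal := ENNReal.toReal_mono (measure_ne_top _ _) (measure_mono hsub)
    _ ≤ ∫ ω, f ω ∂μ := hmarkov
    _ ≤ d * c^s := hIgle s le_rfl
    _ ≤ d * (Real.exp (-(lam/(2*B))))^s := by
        apply mul_le_mul_of_nonneg_left _ (by positivity)
        exact pow_le_pow_left₀ hc0 hcle s
    _ = d * Real.exp (-(lam * s) / (2 * B)) := by
        rw [← Real.exp_nat_mul]
        congr 1
        ring
end

section
/- For a random vector z ∈ ℝ^R with entries in {±1} (so ‖z‖² = R) and E[zz^T] = I, if z_1,...,z_n are i.i.d. copies of z, then P(span{z_1,...,z_n} ≠ ℝ^R) ≤ R·exp(-n/(2R)). -/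
open MeasureTheory ProbabilityTheory Matrix RealInnerProductSpace

namespace ChernoffSpanAux

variable {R : ℕ}

noncomputable def eL : (Fin R → ℝ) ≃ₗ[ℝ] EuclideanSpace ℝ (Fin R) :=
  (WithLp.linearEquiv 2 ℝ (Fin R → ℝ)).symm

lemma inner_eucl (u v : EuclideanSpace ℝ (Fin R)) : ⟪u, v⟫ = ∑ j, u j * v j := by
  rw [PiLp.inner_apply]
  simp [RCLike.inner_apply]
  exact Finset.sum_congr rfl fun j _ => mul_comm _ _

lemma inner_eL (u v : Fin R → ℝ) : ⟪eL u, eL v⟫ = ∑ j, u j * v j :=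
  inner_eucl (eL u) (eL v)

def Espan (n : ℕ) (V : Submodule ℝ (Fin R → ℝ)) : Set (Fin n → Fin R → ℝ) :=
  {f | V ⊔ Submodule.span ℝ (Set.range f) ≠ ⊤}

lemma espan_eq (n : ℕ) (V : Submodule ℝ (Fin R → ℝ)) :
    Espan n V = {f | ∃ u : Fin R → ℝ, (∑ j, u j ^ 2) = 1 ∧
      (∀ x ∈ V, ∑ j, u j * x j = 0) ∧ ∀ k, ∑ j, u j * f k j = 0} := by
  ext f
  constructor
  · intro hf
    set W : Submodule ℝ (Fin R → ℝ) := V ⊔ Submodule.span ℝ (Set.range f) with hW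
    have hWt : Submodule.map eL.toLinearMap W ≠ ⊤ := by
      intro h
      apply hf
      rw [eq_top_iff]
      intro x _
      have : eL x ∈ Submodule.map eL.toLinearMap W := by rw [h]; trivial
      rcases this with ⟨y, hy, hxy⟩
      have : y = x := eL.injective hxy
      rwa [this] at hy
    have hbot : (Submodule.map eL.toLinearMap W)ᗮ ≠ ⊥ := by
      simpa only [ne_eq, Submodule.orthogonal_eq_bot_iff] using hWt
    obtain ⟨u', hu'mem, hu'ne⟩ := Submodule.exists_mem_ne_zero_of_ne_bot hbot
    refine ⟨eL.symm (‖u'‖⁻¹ • u'), ?_, ?_, ?_⟩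
    · have h1 : ‖(‖u'‖⁻¹ • u')‖ = 1 := by
        rw [norm_smul, norm_inv, norm_norm, inv_mul_cancel₀ (norm_ne_zero_iff.2 hu'ne)]
      have := inner_eL (eL.symm (‖u'‖⁻¹ • u')) (eL.symm (‖u'‖⁻¹ • u'))
      rw [eL.apply_symm_apply] at this
      rw [real_inner_self_eq_norm_sq, h1] at this
      simp only [one_pow] at this
      simp only [pow_two]
      exact this.symm
    · intro x hx
      have hx' : eL x ∈ Submodule.map eL.toLinearMap W :=
        ⟨x, Submodule.mem_sup_left hx, rfl⟩
      have := Submodule.inner_left_of_mem_orthogonal hx' hu'mem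
      have h2 : ⟪‖u'‖⁻¹ • u', eL x⟫ = 0 := by
        rw [real_inner_smul_left, this, mul_zero]
      have := (inner_eL (eL.symm (‖u'‖⁻¹ • u')) x).symm
      rw [eL.apply_symm_apply] at this
      rw [this]; exact h2
    · intro k
      have hfk : f k ∈ W := Submodule.mem_sup_right
        (Submodule.subset_span (Set.mem_range_self k))
      have hx' : eL (f k) ∈ Submodule.map eL.toLinearMap W :=
        ⟨f k, hfk, rfl⟩
      have := Submodule.inner_left_of_mem_orthogonal hx' hu'mem
      have h2 : ⟪‖u'‖⁻¹ • u', eL (f k)⟫ = 0 := by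
        rw [real_inner_smul_left, this, mul_zero]
      have := (inner_eL (eL.symm (‖u'‖⁻¹ • u')) (f k)).symm
      rw [eL.apply_symm_apply] at this
      rw [this]; exact h2
  · rintro ⟨u, hu1, huV, huf⟩ htop
    have hune : eL u ≠ 0 := by
      intro h
      have hz : ∀ j, u j = 0 := by
        intro j
        have := congrFun (congrArg (fun (x : EuclideanSpace ℝ (Fin R)) => (x : Fin R → ℝ)) h) j
        exact this
      rw [Finset.sum_eq_zero (fun j _ => by rw [hz j]; ring)] at hu1
      norm_num at hu1
    have hmem : eL u ∈ (Submodule.map eL.toLinearMap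
        (V ⊔ Submodule.span ℝ (Set.range f)))ᗮ := by
      rw [Submodule.mem_orthogonal]
      rintro _ ⟨y, hy, rfl⟩
      show (⟪eL y, eL u⟫ : ℝ) = 0
      rw [inner_eL]
      rcases Submodule.mem_sup.mp hy with ⟨a, ha, b, hb, rfl⟩
      have hbz : ∑ j, b j * u j = 0 := by
        refine Submodule.span_induction (p := fun b _ => ∑ j, b j * u j = 0)
          ?_ ?_ ?_ ?_ hb
        · rintro _ ⟨k, rfl⟩
          rw [← huf k]
          exact Finset.sum_congr rfl fun j _ => mul_comm _ _
        · simp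
        · intro x y _ _ hx hy
          simp only [Pi.add_apply, add_mul, Finset.sum_add_distrib, hx, hy, add_zero]
        · intro a x _ hx
          simp only [Pi.smul_apply, smul_eq_mul, mul_assoc, ← Finset.mul_sum, hx, mul_zero]
      have haz : ∑ j, a j * u j = 0 := by
        rw [← huV a ha]
        exact Finset.sum_congr rfl fun j _ => mul_comm _ _
      simp only [Pi.add_apply, add_mul, Finset.sum_add_distrib, haz, hbz, add_zero]
    rw [htop, Submodule.map_top, LinearEquiv.range, Submodule.top_orthogonal_eq_bot,
      Submodule.mem_bot] at hmem
    exact hune hmem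

lemma espan_closed (n : ℕ) (V : Submodule ℝ (Fin R → ℝ)) :
    IsClosed {f : Fin n → Fin R → ℝ | ∃ u : Fin R → ℝ, (∑ j, u j ^ 2) = 1 ∧
      (∀ x ∈ V, ∑ j, u j * x j = 0) ∧ ∀ k, ∑ j, u j * f k j = 0} := by
  set K : Set (Fin R → ℝ) :=
    {u | (∑ j, u j ^ 2) = 1 ∧ ∀ x ∈ V, ∑ j, u j * x j = 0} with hK
  have hKclosed : IsClosed K := by
    have h1 : IsClosed {u : Fin R → ℝ | (∑ j, u j ^ 2) = 1} :=
      isClosed_eq (by continuity) continuous_const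
    have h2 : IsClosed {u : Fin R → ℝ | ∀ x ∈ V, ∑ j, u j * x j = 0} := by
      have he : {u : Fin R → ℝ | ∀ x ∈ V, ∑ j, u j * x j = 0} =
          ⋂ x ∈ (V : Set (Fin R → ℝ)), {u : Fin R → ℝ | ∑ j, u j * x j = 0} := by
        ext u; simp
      rw [he]
      exact isClosed_biInter fun x _ => isClosed_eq (by continuity) continuous_const
    exact h1.inter h2
  have hKcompact : IsCompact K := by
    refine Metric.isCompact_of_isClosed_isBounded hKclosed ?_
    refine (Metric.isBounded_closedBall (x := (0 : Fin R → ℝ)) (r := 1)).subset ?_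
    intro u hu
    rw [Metric.mem_closedBall, dist_zero_right]
    refine (pi_norm_le_iff_of_nonneg zero_le_one).mpr fun j => ?_
    rw [Real.norm_eq_abs, abs_le]
    have h1 : u j ^ 2 ≤ 1 := by
      rw [← hu.1]
      refine Finset.single_le_sum (f := fun j => u j ^ 2) (fun i _ => sq_nonneg _)
        (Finset.mem_univ j)
    constructor <;> nlinarith
  apply IsSeqClosed.isClosed
  intro f g hf hfg
  choose u hu1 hu2 hu3 using fun m => hf m
  obtain ⟨w, hwK, φ, hφ, hwt⟩ := hKcompact.tendsto_subseq (fun m => ⟨hu1 m, hu2 m⟩)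
  refine ⟨w, hwK.1, hwK.2, fun k => ?_⟩
  have h1 : Filter.Tendsto (fun m => ∑ j, u (φ m) j * f (φ m) k j)
      Filter.atTop (nhds (∑ j, w j * g k j)) := by
    refine tendsto_finset_sum _ fun j _ => Filter.Tendsto.mul ?_ ?_
    · exact ((continuous_apply j).tendsto w).comp hwt
    · have : Filter.Tendsto (fun m => f (φ m)) Filter.atTop (nhds (g)) :=
        hfg.comp hφ.tendsto_atTop
      exact ((continuous_apply j).tendsto (g k)).comp
        (((continuous_apply k).tendsto g).comp this)
  have h2 : Filter.Tendsto (fun m => ∑ j, u (φ m) j * f (φ m) k j)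
      Filter.atTop (nhds 0) := by
    simp only [hu3]
    exact tendsto_const_nhds
  exact tendsto_nhds_unique h1 h2

lemma espan_measurable (n : ℕ) (V : Submodule ℝ (Fin R → ℝ)) : MeasurableSet (Espan n V) := by
  rw [espan_eq]
  exact (espan_closed n V).measurableSet

lemma measure_subspace_le (hR : 0 < R) (ν : Measure (Fin R → ℝ)) [IsProbabilityMeasure ν]
    (hsign : ∀ᵐ v ∂ν, ∀ i, v i = 1 ∨ v i = -1)
    (hmom : ∀ i j, ∫ v, v i * v j ∂ν = (1 : Matrix (Fin R) (Fin R) ℝ) i j)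
    (V : Submodule ℝ (Fin R → ℝ)) (hV : V ≠ ⊤) :
    ν (V : Set (Fin R → ℝ)) ≤ ENNReal.ofReal ((Module.finrank ℝ V : ℝ) / R) := by
  classical
  set V' : Submodule ℝ (EuclideanSpace ℝ (Fin R)) := Submodule.map eL.toLinearMap V with hV'def
  have hdV : Module.finrank ℝ V' = Module.finrank ℝ V := LinearEquiv.finrank_map_eq eL V
  set d : ℕ := Module.finrank ℝ V with hd
  set m : ℕ := Module.finrank ℝ V'ᗮ with hmdef
  have hdm : d + m = R := by
    have := Submodule.finrank_add_finrank_orthogonal V'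
    rwa [hdV, finrank_euclideanSpace_fin] at this
  set b := stdOrthonormalBasis ℝ ↥V'ᗮ
  set w : Fin m → EuclideanSpace ℝ (Fin R) := fun i => (b i : EuclideanSpace ℝ (Fin R)) with hwdef
  have hw : Orthonormal ℝ w := by
    constructor
    · intro i
      exact b.orthonormal.1 i
    · intro i j hij
      have h := b.orthonormal.2 hij
      simpa [Submodule.coe_inner] using h
  have hwmem : ∀ i, w i ∈ V'ᗮ := fun i => SetLike.coe_mem (b i)
  -- integrability of coordinate products
  have hint : ∀ j l : Fin R, Integrable (fun v : Fin R → ℝ => v j * v l) ν := by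
    intro j l
    refine Integrable.mono' (integrable_const 1)
      (((measurable_pi_apply j).mul (measurable_pi_apply l)).aestronglyMeasurable) ?_
    filter_upwards [hsign] with v hv
    rcases hv j with h1 | h1 <;> rcases hv l with h2 | h2 <;> simp [h1, h2]
  set g : (Fin R → ℝ) → ℝ := fun v => ∑ i, (∑ j, w i j * v j) ^ 2 with hgdef
  have hexp : ∀ i : Fin m, (fun v : Fin R → ℝ => (∑ j, w i j * v j) ^ 2) =
      fun v => ∑ j, ∑ l, (w i j * w i l) * (v j * v l) := by
    intro i
    funext v
    rw [pow_two, Finset.sum_mul_sum]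
    exact Finset.sum_congr rfl fun j _ => Finset.sum_congr rfl fun l _ => by ring
  have hgint : ∀ i : Fin m, Integrable (fun v : Fin R → ℝ => (∑ j, w i j * v j) ^ 2) ν := by
    intro i
    rw [hexp i]
    exact integrable_finset_sum _ fun j _ => integrable_finset_sum _ fun l _ =>
      ((hint j l).const_mul _)
  have hnorm1 : ∀ i : Fin m, ∑ j, w i j * w i j = 1 := by
    intro i
    have h1 := hw.1 i
    rw [EuclideanSpace.norm_eq] at h1
    have h2 : ∑ j, w i j ^ 2 = 1 := by
      have := Real.sqrt_eq_one.mp (by simpa using h1)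
      simpa [pow_two] using this
    simpa [pow_two] using h2
  have hgavg : ∫ v, g v ∂ν = m := by
    rw [hgdef]
    rw [integral_finset_sum _ (fun i _ => hgint i)]
    have : ∀ i : Fin m, ∫ v, (∑ j, w i j * v j) ^ 2 ∂ν = 1 := by
      intro i
      rw [hexp i]
      rw [integral_finset_sum _ (fun j _ => integrable_finset_sum _ fun l _ =>
        ((hint j l).const_mul _))]
      have : ∀ j : Fin R, ∫ v, ∑ l, (w i j * w i l) * (v j * v l) ∂ν = w i j * w i j := by
        intro j
        rw [integral_finset_sum _ (fun l _ => ((hint j l).const_mul _))]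
        have : ∀ l : Fin R, ∫ v, (w i j * w i l) * (v j * v l) ∂ν =
            (w i j * w i l) * (1 : Matrix (Fin R) (Fin R) ℝ) j l := by
          intro l
          rw [integral_const_mul, hmom j l]
        rw [Finset.sum_congr rfl fun l _ => this l]
        simp [Matrix.one_apply]
      rw [Finset.sum_congr rfl fun j _ => this j, hnorm1 i]
    rw [Finset.sum_congr rfl fun i _ => this i]
    simp
  have hVclosed : IsClosed (V : Set (Fin R → ℝ)) := Submodule.closed_of_finiteDimensional V
  have hVm : MeasurableSet (V : Set (Fin R → ℝ)) := hVclosed.measurableSet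
  have hbound : ∀ᵐ v ∂ν, g v ≤ Set.indicator ((V : Set (Fin R → ℝ))ᶜ) (fun _ => (R : ℝ)) v := by
    filter_upwards [hsign] with v hv
    by_cases hvV : v ∈ V
    · have hz : g v = 0 := by
        refine Finset.sum_eq_zero fun i _ => ?_
        have hmemV' : eL v ∈ V' := ⟨v, hvV, rfl⟩
        have : ⟪w i, eL v⟫ = 0 := by
          rw [real_inner_comm]
          exact (Submodule.mem_orthogonal V' (w i)).mp (hwmem i) _ hmemV'
        rw [inner_eucl] at this
        have heq : ∑ j, w i j * v j = 0 := this
        rw [heq]; ring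
      rw [Set.indicator_of_notMem (by simpa using hvV), hz]
    · rw [Set.indicator_of_mem (by simpa using hvV)]
      have hb := hw.sum_inner_products_le (eL v) (s := Finset.univ)
      have hL : ∑ i, ‖(⟪w i, eL v⟫ : ℝ)‖ ^ 2 = g v := by
        refine Finset.sum_congr rfl fun i _ => ?_
        rw [inner_eucl, Real.norm_eq_abs, sq_abs]
        rfl
      have hRn : ‖eL v‖ ^ 2 = (R : ℝ) := by
        rw [EuclideanSpace.norm_eq, Real.sq_sqrt (Finset.sum_nonneg fun j _ => sq_nonneg _)]
        have : ∀ j : Fin R, ‖(eL v) j‖ ^ 2 = 1 := by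
          intro j
          have he : (eL v) j = v j := rfl
          rw [Real.norm_eq_abs, sq_abs, he]
          rcases hv j with h1 | h1 <;> rw [h1] <;> norm_num
        rw [Finset.sum_congr rfl fun j _ => this j]
        simp
      rw [hL, hRn] at hb
      exact hb
  have hindint : Integrable (Set.indicator ((V : Set (Fin R → ℝ))ᶜ) (fun _ => (R : ℝ))) ν :=
    (integrable_const (R : ℝ)).indicator hVm.compl
  have hgint' : Integrable g ν := integrable_finset_sum _ fun i _ => hgint i
  have hkey : (m : ℝ) ≤ R * (ν ((V : Set (Fin R → ℝ))ᶜ)).toReal := by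
    have h1 := integral_mono_ae hgint' hindint hbound
    rw [hgavg] at h1
    rw [integral_indicator_const _ hVm.compl] at h1
    rw [smul_eq_mul] at h1
    rw [measureReal_def] at h1
    linarith
  have hc : (ν ((V : Set (Fin R → ℝ))ᶜ)).toReal = 1 - (ν (V : Set (Fin R → ℝ))).toReal := by
    rw [prob_compl_eq_one_sub hVm]
    rw [ENNReal.toReal_sub_of_le prob_le_one ENNReal.one_ne_top]
    simp
  have hRpos : (0 : ℝ) < R := by exact_mod_cast hR
  have hfinal : (ν (V : Set (Fin R → ℝ))).toReal ≤ (d : ℝ) / R := by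
    rw [le_div_iff₀ hRpos]
    have hdr : (d : ℝ) = R - m := by
      have : (d : ℝ) + m = R := by exact_mod_cast hdm
      linarith
    rw [hc] at hkey
    nlinarith
  calc ν (V : Set (Fin R → ℝ)) = ENNReal.ofReal (ν (V : Set (Fin R → ℝ))).toReal := by
        rw [ENNReal.ofReal_toReal (measure_ne_top ν _)]
    _ ≤ ENNReal.ofReal ((d : ℝ) / R) := ENNReal.ofReal_le_ofReal hfinal

lemma key_induction (hR : 0 < R) (ν : Measure (Fin R → ℝ)) [IsProbabilityMeasure ν]
    (hB : ∀ V : Submodule ℝ (Fin R → ℝ), V ≠ ⊤ →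
      ν (V : Set (Fin R → ℝ)) ≤ ENNReal.ofReal ((Module.finrank ℝ V : ℝ) / R)) :
    ∀ (n : ℕ) (V : Submodule ℝ (Fin R → ℝ)),
      (Measure.pi fun _ : Fin n => ν) (Espan n V) ≤
        ENNReal.ofReal (((R : ℝ) - Module.finrank ℝ V) * (1 - 1/R) ^ n) := by
  have hRpos : (0 : ℝ) < R := by exact_mod_cast hR
  have hc0 : (0 : ℝ) ≤ 1 - 1/R := by
    rw [sub_nonneg, div_le_one hRpos]
    exact_mod_cast hR
  intro n
  induction n with
  | zero =>
    intro V
    by_cases hV : V = ⊤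
    · have : Espan 0 V = (∅ : Set (Fin 0 → Fin R → ℝ)) := by
        ext f
        simp [Espan, hV]
      rw [this]
      simp
    · have hEs : Espan 0 V = Set.univ := by
        ext f
        have : Set.range f = ∅ := Set.range_eq_empty f
        simp [Espan, this, hV]
      rw [hEs]
      have hle : (1 : ℝ) ≤ ((R : ℝ) - Module.finrank ℝ V) * (1 - 1/R) ^ 0 := by
        rw [pow_zero, mul_one, le_sub_iff_add_le]
        have : Module.finrank ℝ V < R := by
          have := Submodule.finrank_lt (K := ℝ) (V := Fin R → ℝ) hV
          simpa using this
        have : Module.finrank ℝ V + 1 ≤ R := this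
        exact_mod_cast by linarith [this]
      calc (Measure.pi fun _ : Fin 0 => ν) Set.univ = 1 := measure_univ
        _ ≤ ENNReal.ofReal (((R : ℝ) - Module.finrank ℝ V) * (1 - 1/R) ^ 0) := by
            rw [← ENNReal.ofReal_one]
            exact ENNReal.ofReal_le_ofReal hle
  | succ n ih =>
    intro V
    by_cases hV : V = ⊤
    · have : Espan (n+1) V = (∅ : Set (Fin (n+1) → Fin R → ℝ)) := by
        ext f
        simp [Espan, hV]
      rw [this]
      simp
    · -- setup
      have hd : Module.finrank ℝ V < R := by
        have := Submodule.finrank_lt (K := ℝ) (V := Fin R → ℝ) hV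
        simpa using this
      set d : ℕ := Module.finrank ℝ V with hddef
      have hdR : (d : ℝ) + 1 ≤ R := by exact_mod_cast hd
      set c : ℝ := 1 - 1/R with hcdef
      set e := MeasurableEquiv.piFinSuccAbove (fun _ : Fin (n+1) => (Fin R → ℝ)) 0 with hedef
      have hmp := measurePreserving_piFinSuccAbove (fun _ : Fin (n+1) => ν) 0
      set S : Set ((Fin R → ℝ) × (Fin n → Fin R → ℝ)) := e.symm ⁻¹' (Espan (n+1) V) with hSdef
      have hSm : MeasurableSet S := e.symm.measurable (espan_measurable _ _)
      have h1 : (Measure.pi fun _ : Fin (n+1) => ν) (Espan (n+1) V) =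
          (ν.prod (Measure.pi fun _ : Fin n => ν)) S := by
        have h2 : e ⁻¹' S = Espan (n+1) V := by
          ext f
          simp [hSdef, Set.mem_preimage, MeasurableEquiv.symm_apply_apply]
        rw [← h2]
        rw [← hmp.map_eq]
        rw [Measure.map_apply e.measurable hSm]
      have hslice : ∀ v : Fin R → ℝ, Prod.mk v ⁻¹' S =
          Espan n (V ⊔ Submodule.span ℝ {v}) := by
        intro v
        ext g
        have he : e.symm (v, g) = Fin.cons v g := by
          show (Fin.insertNthEquiv (fun _ : Fin (n+1) => (Fin R → ℝ)) 0) (v, g) = Fin.cons v g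
          simp [Fin.insertNthEquiv, Fin.insertNth_zero']
        simp only [hSdef, Set.mem_preimage, he, Espan, Set.mem_setOf_eq]
        rw [Fin.range_cons, Submodule.span_insert, ← sup_assoc]
      have h3 : (ν.prod (Measure.pi fun _ : Fin n => ν)) S =
          ∫⁻ v, (Measure.pi fun _ : Fin n => ν) (Prod.mk v ⁻¹' S) ∂ν :=
        Measure.prod_apply hSm
      have h4 : ∀ v : Fin R → ℝ, (Measure.pi fun _ : Fin n => ν) (Prod.mk v ⁻¹' S) ≤
          ENNReal.ofReal (c ^ n) *
            (ENNReal.ofReal ((R : ℝ) - d - 1) + Set.indicator (V : Set (Fin R → ℝ)) 1 v) := by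
        intro v
        rw [hslice v]
        refine le_trans (ih (V ⊔ Submodule.span ℝ {v})) ?_
        by_cases hvV : v ∈ V
        · have hsup : V ⊔ Submodule.span ℝ {v} = V := by
            rw [sup_eq_left]
            rwa [Submodule.span_singleton_le_iff_mem]
          rw [hsup, Set.indicator_of_mem hvV]
          rw [mul_comm ((R : ℝ) - _) (c ^ n), ENNReal.ofReal_mul (pow_nonneg hc0 n)]
          refine mul_le_mul_right ?_ _
          have : ((R : ℝ) - d) = ((R : ℝ) - d - 1) + 1 := by ring
          rw [this, ENNReal.ofReal_add (by linarith [hdR] : (0:ℝ) ≤ (R : ℝ) - d - 1)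
            zero_le_one]
          simp
        · have hlt : V < V ⊔ Submodule.span ℝ {v} := by
            refine lt_of_le_of_ne le_sup_left ?_
            intro hEq
            apply hvV
            rw [hEq]
            exact Submodule.mem_sup_right (Submodule.mem_span_singleton_self v)
          have hrk : (d : ℝ) + 1 ≤ Module.finrank ℝ ↥(V ⊔ Submodule.span ℝ {v}) := by
            have := Submodule.finrank_lt_finrank_of_lt hlt
            exact_mod_cast this
          rw [Set.indicator_of_notMem hvV, add_zero]
          rw [mul_comm ((R : ℝ) - _) (c ^ n), ENNReal.ofReal_mul (pow_nonneg hc0 n)]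
          refine mul_le_mul_right (ENNReal.ofReal_le_ofReal (by linarith)) _
      have h5 : ∫⁻ v, ENNReal.ofReal (c ^ n) *
            (ENNReal.ofReal ((R : ℝ) - d - 1) + Set.indicator (V : Set (Fin R → ℝ)) 1 v) ∂ν =
          ENNReal.ofReal (c ^ n) * (ENNReal.ofReal ((R : ℝ) - d - 1) + ν (V : Set (Fin R → ℝ))) := by
        have hVm : MeasurableSet (V : Set (Fin R → ℝ)) :=
          (Submodule.closed_of_finiteDimensional V).measurableSet
        rw [lintegral_const_mul']
        · congr 1
          rw [lintegral_add_left (by exact measurable_const)]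
          rw [lintegral_const, measure_univ, mul_one]
          congr 1
          exact lintegral_indicator_one hVm
        · exact ENNReal.ofReal_ne_top
      have h6 : ν (V : Set (Fin R → ℝ)) ≤ ENNReal.ofReal ((d : ℝ) / R) := hB V hV
      calc (Measure.pi fun _ : Fin (n+1) => ν) (Espan (n+1) V)
          = ∫⁻ v, (Measure.pi fun _ : Fin n => ν) (Prod.mk v ⁻¹' S) ∂ν := by rw [h1, h3]
        _ ≤ ∫⁻ v, ENNReal.ofReal (c ^ n) *
            (ENNReal.ofReal ((R : ℝ) - d - 1) + Set.indicator (V : Set (Fin R → ℝ)) 1 v) ∂ν :=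
            lintegral_mono h4
        _ = ENNReal.ofReal (c ^ n) * (ENNReal.ofReal ((R : ℝ) - d - 1) + ν (V : Set (Fin R → ℝ))) := h5
        _ ≤ ENNReal.ofReal (c ^ n) * (ENNReal.ofReal ((R : ℝ) - d - 1) + ENNReal.ofReal ((d : ℝ) / R)) :=
            mul_le_mul_right (add_le_add_right h6 _) _
        _ = ENNReal.ofReal (((R : ℝ) - d) * c ^ (n+1)) := by
            rw [← ENNReal.ofReal_add (by linarith [hdR] : (0:ℝ) ≤ (R : ℝ) - d - 1)
              (div_nonneg (Nat.cast_nonneg d) hRpos.le)]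
            rw [← ENNReal.ofReal_mul (pow_nonneg hc0 n)]
            congr 1
            have hkey : (R : ℝ) - d - 1 + (d : ℝ)/R = ((R : ℝ) - d) * c := by
              rw [hcdef]
              field_simp
              ring
            rw [hkey, pow_succ]
            ring

end ChernoffSpanAux

open ChernoffSpanAux in
theorem chernoff_span_sign_vectors {R n : ℕ} {Ω : Type*} [MeasurableSpace Ω]
    (μ : Measure Ω) [IsProbabilityMeasure μ]
    (Z : Fin n → Ω → (Fin R → ℝ)) (hmeas : ∀ k, Measurable (Z k))
    (hindep : iIndepFun Z μ)
    (ν : Measure (Fin R → ℝ)) (hid : ∀ k, Measure.map (Z k) μ = ν)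
    (hsign : ∀ᵐ v ∂ν, ∀ i, v i = 1 ∨ v i = -1)
    (hmom : ∀ i j, ∫ v, v i * v j ∂ν = (1 : Matrix (Fin R) (Fin R) ℝ) i j) :
    (μ {ω | Submodule.span ℝ (Set.range fun k => Z k ω) ≠ ⊤}).toReal ≤
      R * Real.exp (-(n : ℝ) / (2 * R)) := by
  classical
  rcases Nat.eq_zero_or_pos R with hR0 | hR
  · subst hR0
    have hempty : {ω | Submodule.span ℝ (Set.range fun k => Z k ω) ≠ ⊤} = (∅ : Set Ω) := by
      ext ω
      simp only [Set.mem_setOf_eq, Set.mem_empty_iff_false, iff_false, not_not]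
      rw [eq_top_iff]
      intro x _
      have hx : x = 0 := Subsingleton.elim x 0
      rw [hx]
      exact Submodule.zero_mem _
    rw [hempty]
    simp
  have hRpos : (0 : ℝ) < R := by exact_mod_cast hR
  have hR1 : (1 : ℝ) ≤ R := by exact_mod_cast hR
  rcases Nat.eq_zero_or_pos n with hn0 | hn
  · subst hn0
    have h1 : (μ {ω | Submodule.span ℝ (Set.range fun k : Fin 0 => Z k ω) ≠ ⊤}).toReal ≤ 1 :=
      ENNReal.toReal_le_of_le_ofReal zero_le_one (by rw [ENNReal.ofReal_one]; exact prob_le_one)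
    have h2 : (1 : ℝ) ≤ R * Real.exp (-(0 : ℕ) / (2 * R)) := by
      have hz : (-((0 : ℕ) : ℝ)) / (2 * R) = 0 := by norm_num
      rw [hz, Real.exp_zero, mul_one]
      exact hR1
    calc (μ _).toReal ≤ 1 := h1
      _ ≤ _ := h2
  haveI hνprob : IsProbabilityMeasure ν := by
    rw [← hid ⟨0, hn⟩]
    exact Measure.isProbabilityMeasure_map (hmeas _).aemeasurable
  set p : Ω → (Fin n → Fin R → ℝ) := fun ω k => Z k ω with hp
  have hpm : Measurable p := measurable_pi_iff.mpr hmeas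
  have hmap : μ.map p = Measure.pi (fun _ : Fin n => ν) := by
    symm
    refine Measure.pi_eq ?_
    intro s hs
    rw [Measure.map_apply hpm (MeasurableSet.univ_pi hs)]
    have hpre : p ⁻¹' Set.univ.pi s = ⋂ k ∈ Finset.univ, Z k ⁻¹' s k := by
      ext ω
      simp [hp, Set.mem_univ_pi]
    rw [hpre, hindep.measure_inter_preimage_eq_mul Finset.univ (fun k _ => hs k)]
    exact Finset.prod_congr rfl fun k _ => by rw [← hid k, Measure.map_apply (hmeas k) (hs k)]
  have hev : {ω | Submodule.span ℝ (Set.range fun k => Z k ω) ≠ ⊤} = p ⁻¹' (Espan n ⊥) := by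
    ext ω
    simp [Espan, hp]
  have hB : ∀ V : Submodule ℝ (Fin R → ℝ), V ≠ ⊤ →
      ν (V : Set (Fin R → ℝ)) ≤ ENNReal.ofReal ((Module.finrank ℝ V : ℝ) / R) :=
    fun V hV => measure_subspace_le hR ν hsign hmom V hV
  have hmeasle : μ {ω | Submodule.span ℝ (Set.range fun k => Z k ω) ≠ ⊤} ≤
      ENNReal.ofReal (((R : ℝ) - 0) * (1 - 1/R) ^ n) := by
    rw [hev, ← Measure.map_apply hpm (espan_measurable n ⊥), hmap]
    have h := key_induction hR ν hB n ⊥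
    simpa using h
  have hc0 : (0 : ℝ) ≤ 1 - 1/R := by
    rw [sub_nonneg, div_le_one hRpos]
    exact hR1
  have hcexp : ((R : ℝ) - 0) * (1 - 1/R) ^ n ≤ R * Real.exp (-(n : ℝ) / (2 * R)) := by
    rw [sub_zero]
    refine mul_le_mul_of_nonneg_left ?_ (by positivity)
    have h1 : (1 - 1/(R : ℝ)) ≤ Real.exp (-(1/(2 * R))) := by
      have h2 := Real.add_one_le_exp (-(1/(R : ℝ)))
      have h3 : Real.exp (-(1/(R : ℝ))) ≤ Real.exp (-(1/(2 * R))) := by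
        apply Real.exp_le_exp.mpr
        have : 1/(2 * (R : ℝ)) ≤ 1/R := by
          apply div_le_div_of_nonneg_left one_pos.le hRpos
          linarith
        linarith
      linarith
    calc (1 - 1/(R : ℝ)) ^ n ≤ Real.exp (-(1/(2 * R))) ^ n := pow_le_pow_left₀ hc0 h1 n
      _ = Real.exp (-(n : ℝ) / (2 * R)) := by
          rw [← Real.exp_nat_mul]
          congr 1
          field_simp
  refine ENNReal.toReal_le_of_le_ofReal (by positivity) ?_
  refine le_trans hmeasle (ENNReal.ofReal_le_ofReal hcexp)
end

section
/- If A and B are positive semidefinite linear operators on ℝ^r, then the induced operator A ∨ B on the symmetric tensor space ℝ^r ∨ ℝ^r (defined on elementary symmetric tensors by (A ∨ B)(u ∨ v) = (Au) ∨ (Bv), symmetrized) is positive semidefinite. -/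
open Matrix

lemma trace_transpose_mul_self_nonneg {r : ℕ} (M : Matrix (Fin r) (Fin r) ℝ) :
    0 ≤ (Mᵀ * M).trace := by
  simp only [Matrix.trace, Matrix.diag, Matrix.mul_apply, Matrix.transpose_apply]
  exact Finset.sum_nonneg fun i _ => Finset.sum_nonneg fun j _ => mul_self_nonneg _

lemma psd_sqrt_exists {r : ℕ} {C : Matrix (Fin r) (Fin r) ℝ} (hC : C.PosSemidef) :
    ∃ c : Matrix (Fin r) (Fin r) ℝ, cᵀ = c ∧ c * c = C := by
  open scoped MatrixOrder in refine ⟨CFC.sqrt C, ?_, CFC.sqrt_mul_sqrt_self C hC.nonneg⟩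
  open scoped MatrixOrder in have := (CFC.sqrt_nonneg C).posSemidef.1.eq
  rwa [conjTranspose_eq_transpose_of_trivial] at this

/-- Modeling the symmetric tensor space `ℝ^r ∨ ℝ^r` as the space of symmetric r×r
matrices with the trace inner product `⟨S, T⟩ = trace(SᵀT)`, the operator `A ∨ B`
acts by `S ↦ (A S Bᵀ + B S Aᵀ)/2`.  The claim: if `A` and `B` are positive
semidefinite, then this operator is positive semidefinite, i.e. it is self-adjoint
and its quadratic form is nonnegative on symmetric matrices. -/
theorem symTensor_op_posSemidef {r : ℕ} (A B : Matrix (Fin r) (Fin r) ℝ)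
    (hA : A.PosSemidef) (hB : B.PosSemidef) :
    (∀ S T : Matrix (Fin r) (Fin r) ℝ, S.IsSymm → T.IsSymm →
      (Sᵀ * (((1:ℝ)/2) • (A * T * Bᵀ + B * T * Aᵀ))).trace =
      ((((1:ℝ)/2) • (A * S * Bᵀ + B * S * Aᵀ))ᵀ * T).trace) ∧
    (∀ S : Matrix (Fin r) (Fin r) ℝ, S.IsSymm →
      0 ≤ (Sᵀ * (((1:ℝ)/2) • (A * S * Bᵀ + B * S * Aᵀ))).trace) := by
  have hAt : Aᵀ = A := by
    have := hA.1.eq; rwa [conjTranspose_eq_transpose_of_trivial] at this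
  have hBt : Bᵀ = B := by
    have := hB.1.eq; rwa [conjTranspose_eq_transpose_of_trivial] at this
  constructor
  · intro S T hS hT
    have h1 : (S * (A * (T * B))).trace = (B * (S * (A * T))).trace := by
      rw [show S * (A * (T * B)) = (S * (A * T)) * B by noncomm_ring,
        Matrix.trace_mul_comm]
    have h2 : (S * (B * (T * A))).trace = (A * (S * (B * T))).trace := by
      rw [show S * (B * (T * A)) = (S * (B * T)) * A by noncomm_ring,
        Matrix.trace_mul_comm]
    simp only [Matrix.transpose_smul, Matrix.smul_mul, Matrix.mul_smul, Matrix.trace_smul,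
      Matrix.transpose_add, Matrix.transpose_mul, Matrix.transpose_transpose, hAt, hBt,
      Matrix.add_mul, Matrix.mul_add, Matrix.trace_add, hS.eq, mul_assoc]
    rw [h1, h2]
  · intro S hS
    rw [hS.eq]
    simp only [hAt, hBt, Matrix.mul_smul, Matrix.trace_smul, Matrix.mul_add,
      Matrix.trace_add, smul_eq_mul]
    have key : ∀ (C D : Matrix (Fin r) (Fin r) ℝ), C.PosSemidef → D.PosSemidef →
        0 ≤ (S * (C * S * D)).trace := by
      intro C D hC hD
      obtain ⟨c, hct, hCs⟩ := psd_sqrt_exists hC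
      obtain ⟨d, hdt, hDs⟩ := psd_sqrt_exists hD
      have heq : (S * (C * S * D)).trace = ((c * S * d)ᵀ * (c * S * d)).trace := by
        rw [Matrix.trace_mul_comm ((c * S * d)ᵀ), Matrix.transpose_mul, Matrix.transpose_mul,
          hct, hdt, hS.eq,
          show S * (C * S * D) = (S * c) * (c * (S * (d * d))) from by
            rw [← hCs, ← hDs]; noncomm_ring,
          Matrix.trace_mul_comm (S * c)]
        congr 1
        noncomm_ring
      rw [heq]
      exact trace_transpose_mul_self_nonneg _
    have h2 : (S * (B * S * A)).trace = (S * (A * S * B)).trace := by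
      rw [show S * (B * S * A) = (S * (B * S)) * A by noncomm_ring, Matrix.trace_mul_comm,
        show A * (S * (B * S)) = (A * (S * B)) * S by noncomm_ring, Matrix.trace_mul_comm,
        show S * (A * (S * B)) = S * (A * S * B) by noncomm_ring]
    rw [h2]
    have := key A B hA hB
    linarith
end
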